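/- Let k ≥ 2^{10} and let s be a positive integer. Suppose an n × N matrix Φ with unit-norm columns satisfies flat RIP of order k with constant δ, i.e., for all disjoint J₁, J₂ ⊆ {1,...,N} with |J₁| ≤ k, |J₂| ≤ k, |⟨∑_{j∈J₁} u_j, ∑_{j∈J₂} u_j⟩| ≤ δ(|J₁||J₂|)^{1/2}. Then Φ satisfies the RIP of order 2sk with constant 44·s·δ·log k. -/

import Mathlib

open Finset

section AuxRIP

variable {ι : Type*} [DecidableEq ι]

lemma wgt_sum {R : Type*} [CommRing R] (a : ι → R) (A : Finset ι) :
    ∑ T ∈ A.powerset, (∏ i ∈ T, a i) * ∏ i ∈ A \ T, (1 - a i) = 1 := by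
  rw [← Finset.prod_add]
  simp

lemma expand_lin {R : Type*} [CommRing R] (a φ : ι → R) (A : Finset ι) :
    ∑ T ∈ A.powerset, ((∏ i ∈ T, a i) * ∏ i ∈ A \ T, (1 - a i)) * ∑ i ∈ T, φ i
      = ∑ i ∈ A, a i * φ i := by
  induction A using Finset.induction_on with
  | empty => simp
  | @insert x s hx ih =>
    rw [Finset.sum_powerset_insert hx, Finset.sum_insert hx]
    have e1 : ∀ T ∈ s.powerset,
        ((∏ i ∈ T, a i) * ∏ i ∈ (insert x s) \ T, (1 - a i)) * ∑ i ∈ T, φ i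
        = (1 - a x) * (((∏ i ∈ T, a i) * ∏ i ∈ s \ T, (1 - a i)) * ∑ i ∈ T, φ i) := by
      intro T hT
      have hxT : x ∉ T := fun h => hx (Finset.mem_powerset.mp hT h)
      have : (insert x s) \ T = insert x (s \ T) := by
        rw [Finset.insert_sdiff_of_notMem _ hxT]
      rw [this, Finset.prod_insert (by simp [hx])]
      ring
    have e2 : ∀ T ∈ s.powerset,
        ((∏ i ∈ insert x T, a i) * ∏ i ∈ (insert x s) \ (insert x T), (1 - a i)) * ∑ i ∈ insert x T, φ i
        = a x * (((∏ i ∈ T, a i) * ∏ i ∈ s \ T, (1 - a i)) * (φ x + ∑ i ∈ T, φ i)) := by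
      intro T hT
      have hxT : x ∉ T := fun h => hx (Finset.mem_powerset.mp hT h)
      have hd : (insert x s) \ (insert x T) = s \ T := by
        ext y
        simp only [Finset.mem_sdiff, Finset.mem_insert]
        constructor
        · rintro ⟨hy1 | hy1, hy2⟩
          · exact absurd (Or.inl hy1) hy2
          · exact ⟨hy1, fun h => hy2 (Or.inr h)⟩
        · rintro ⟨hy1, hy2⟩
          exact ⟨Or.inr hy1, by rintro (rfl | h); exacts [hx hy1, hy2 h]⟩
      rw [hd, Finset.prod_insert hxT, Finset.sum_insert hxT]
      ring
    rw [Finset.sum_congr rfl e1, Finset.sum_congr rfl e2, ← Finset.mul_sum, ← Finset.mul_sum]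
    have e3 : ∑ T ∈ s.powerset,
        ((∏ i ∈ T, a i) * ∏ i ∈ s \ T, (1 - a i)) * (φ x + ∑ i ∈ T, φ i)
        = φ x + ∑ T ∈ s.powerset, ((∏ i ∈ T, a i) * ∏ i ∈ s \ T, (1 - a i)) * ∑ i ∈ T, φ i := by
      have : ∀ T ∈ s.powerset,
          ((∏ i ∈ T, a i) * ∏ i ∈ s \ T, (1 - a i)) * (φ x + ∑ i ∈ T, φ i)
          = ((∏ i ∈ T, a i) * ∏ i ∈ s \ T, (1 - a i)) * φ x
            + ((∏ i ∈ T, a i) * ∏ i ∈ s \ T, (1 - a i)) * ∑ i ∈ T, φ i := fun T _ => by ring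
      rw [Finset.sum_congr rfl this, Finset.sum_add_distrib, ← Finset.sum_mul, wgt_sum, one_mul]
    rw [e3, ih]
    ring

lemma powerset_half_sum {R : Type*} [CommRing R] (A : Finset ι) (φ : ι → R) :
    2 * ∑ T ∈ A.powerset, ∑ i ∈ T, φ i = 2 ^ A.card * ∑ i ∈ A, φ i := by
  induction A using Finset.induction_on with
  | empty => simp
  | @insert x s hx ih =>
    rw [Finset.sum_powerset_insert hx]
    have e1 : ∀ T ∈ s.powerset, ∑ i ∈ insert x T, φ i = φ x + ∑ i ∈ T, φ i := by
      intro T hT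
      exact Finset.sum_insert (fun h => hx (Finset.mem_powerset.mp hT h))
    rw [Finset.sum_congr rfl e1, Finset.sum_add_distrib, Finset.sum_const, Finset.card_powerset,
      Finset.card_insert_of_notMem hx, Finset.sum_insert hx, nsmul_eq_mul]
    push_cast
    linear_combination 2 * ih

lemma powerset_half_sum_compl {R : Type*} [CommRing R] (A : Finset ι) (φ : ι → R) :
    2 * ∑ T ∈ A.powerset, ∑ i ∈ A \ T, φ i = 2 ^ A.card * ∑ i ∈ A, φ i := by
  have e1 : ∀ T ∈ A.powerset, ∑ i ∈ A \ T, φ i = ∑ i ∈ A, φ i - ∑ i ∈ T, φ i := by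
    intro T hT
    exact Finset.sum_sdiff_eq_sub (Finset.mem_powerset.mp hT)
  rw [Finset.sum_congr rfl e1, Finset.sum_sub_distrib, Finset.sum_const, Finset.card_powerset,
    nsmul_eq_mul]
  push_cast
  linear_combination - powerset_half_sum A φ

lemma powerset_pair_sum {R : Type*} [CommRing R] (A : Finset ι) (h : ι → ι → R) :
    4 * ∑ T ∈ A.powerset, ∑ i ∈ T, ∑ j ∈ A \ T, h i j
      = 2 ^ A.card * ∑ i ∈ A, ∑ j ∈ A.erase i, h i j := by
  induction A using Finset.induction_on with
  | empty => simp
  | @insert x s hx ih =>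
    rw [Finset.sum_powerset_insert hx]
    have e1 : ∀ T ∈ s.powerset, ∑ i ∈ T, ∑ j ∈ (insert x s) \ T, h i j
        = (∑ i ∈ T, ∑ j ∈ s \ T, h i j) + ∑ i ∈ T, h i x := by
      intro T hT
      have hxT : x ∉ T := fun hh => hx (Finset.mem_powerset.mp hT hh)
      have hd : (insert x s) \ T = insert x (s \ T) := Finset.insert_sdiff_of_notMem _ hxT
      rw [hd, ← Finset.sum_add_distrib]
      refine Finset.sum_congr rfl fun i hi => ?_
      rw [Finset.sum_insert (by simp [hx]), add_comm]
    have e2 : ∀ T ∈ s.powerset, ∑ i ∈ insert x T, ∑ j ∈ (insert x s) \ (insert x T), h i j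
        = (∑ i ∈ T, ∑ j ∈ s \ T, h i j) + ∑ j ∈ s \ T, h x j := by
      intro T hT
      have hxT : x ∉ T := fun hh => hx (Finset.mem_powerset.mp hT hh)
      have hTs : T ⊆ s := Finset.mem_powerset.mp hT
      have hd : (insert x s) \ (insert x T) = s \ T := by
        ext y
        simp only [Finset.mem_sdiff, Finset.mem_insert]
        constructor
        · rintro ⟨hy1 | hy1, hy2⟩
          · exact absurd (Or.inl hy1) hy2
          · exact ⟨hy1, fun hh => hy2 (Or.inr hh)⟩
        · rintro ⟨hy1, hy2⟩
          exact ⟨Or.inr hy1, by rintro (rfl | hh); exacts [hx hy1, hy2 hh]⟩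
      rw [hd, Finset.sum_insert hxT, add_comm]
    rw [Finset.sum_congr rfl e1, Finset.sum_congr rfl e2, Finset.sum_add_distrib,
      Finset.sum_add_distrib]
    have e3 : ∑ i ∈ insert x s, ∑ j ∈ (insert x s).erase i, h i j
        = (∑ j ∈ s, h x j) + ((∑ i ∈ s, h i x) + ∑ i ∈ s, ∑ j ∈ s.erase i, h i j) := by
      have e3i : ∀ i ∈ s, ∑ j ∈ (insert x s).erase i, h i j = h i x + ∑ j ∈ s.erase i, h i j := by
        intro i hi
        have hix : x ≠ i := fun hh => hx (hh ▸ hi)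
        rw [Finset.erase_insert_of_ne hix,
          Finset.sum_insert (fun hh => hx (Finset.erase_subset _ _ hh))]
      rw [Finset.sum_insert hx, Finset.erase_insert hx, Finset.sum_congr rfl e3i,
        Finset.sum_add_distrib]
    rw [e3, Finset.card_insert_of_notMem hx]
    have e4 := powerset_half_sum s (fun i => h i x)
    have e5 := powerset_half_sum_compl s (fun j => h x j)
    push_cast at e4 e5 ⊢
    ring_nf
    ring_nf at ih e4 e5
    linear_combination 2*ih + 2*e4 + 2*e5

lemma sum_sqrt_le {κ : Type*} (s : Finset κ) (f : κ → ℝ) (hf : ∀ i ∈ s, 0 ≤ f i) :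
    ∑ i ∈ s, Real.sqrt (f i) ≤ Real.sqrt s.card * Real.sqrt (∑ i ∈ s, f i) := by
  have h := Finset.sum_mul_sq_le_sq_mul_sq s (fun _ => 1) (fun i => Real.sqrt (f i))
  simp only [one_mul, one_pow, Finset.sum_const, nsmul_eq_mul, mul_one] at h
  have h2 : ∑ i ∈ s, Real.sqrt (f i) ^ 2 = ∑ i ∈ s, f i :=
    Finset.sum_congr rfl fun i hi => Real.sq_sqrt (hf i hi)
  rw [h2] at h
  have h5 : 0 ≤ ∑ i ∈ s, Real.sqrt (f i) := Finset.sum_nonneg fun i _ => Real.sqrt_nonneg _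
  calc ∑ i ∈ s, Real.sqrt (f i) = Real.sqrt ((∑ i ∈ s, Real.sqrt (f i)) ^ 2) :=
        (Real.sqrt_sq h5).symm
    _ ≤ Real.sqrt (s.card * ∑ i ∈ s, f i) := Real.sqrt_le_sqrt h
    _ = Real.sqrt s.card * Real.sqrt (∑ i ∈ s, f i) := Real.sqrt_mul (Nat.cast_nonneg _) _

lemma weighted_jensen {κ : Type*} (s : Finset κ) (w g : κ → ℝ)
    (hw : ∀ i ∈ s, 0 ≤ w i) (hg : ∀ i ∈ s, 0 ≤ g i) (hw1 : ∑ i ∈ s, w i = 1) :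
    ∑ i ∈ s, w i * Real.sqrt (g i) ≤ Real.sqrt (∑ i ∈ s, w i * g i) := by
  have h := Finset.sum_mul_sq_le_sq_mul_sq s (fun i => Real.sqrt (w i))
    (fun i => Real.sqrt (w i) * Real.sqrt (g i))
  have e1 : ∀ i ∈ s, Real.sqrt (w i) * (Real.sqrt (w i) * Real.sqrt (g i))
      = w i * Real.sqrt (g i) := by
    intro i hi
    rw [← mul_assoc, Real.mul_self_sqrt (hw i hi)]
  have e2 : ∀ i ∈ s, Real.sqrt (w i) ^ 2 = w i := fun i hi => Real.sq_sqrt (hw i hi)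
  have e3 : ∀ i ∈ s, (Real.sqrt (w i) * Real.sqrt (g i)) ^ 2 = w i * g i := by
    intro i hi
    rw [mul_pow, Real.sq_sqrt (hw i hi), Real.sq_sqrt (hg i hi)]
  rw [Finset.sum_congr rfl e1, Finset.sum_congr rfl e2, hw1, one_mul] at h
  have h4 : (∑ i ∈ s, w i * Real.sqrt (g i)) ^ 2 ≤ ∑ i ∈ s, w i * g i :=
    h.trans_eq (Finset.sum_congr rfl e3)
  have h5 : 0 ≤ ∑ i ∈ s, w i * Real.sqrt (g i) :=
    Finset.sum_nonneg fun i hi => mul_nonneg (hw i hi) (Real.sqrt_nonneg _)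
  calc ∑ i ∈ s, w i * Real.sqrt (g i)
      = Real.sqrt ((∑ i ∈ s, w i * Real.sqrt (g i)) ^ 2) := (Real.sqrt_sq h5).symm
    _ ≤ Real.sqrt (∑ i ∈ s, w i * g i) := Real.sqrt_le_sqrt h4

lemma coeff_flat {k : ℕ} {δ : ℝ} (c : ι → ι → ℂ)
    (H : ∀ A B : Finset ι, Disjoint A B → A.card ≤ k → B.card ≤ k →
      ‖∑ i ∈ A, ∑ j ∈ B, c i j‖ ≤ δ * Real.sqrt ((A.card : ℝ) * B.card))
    (A B : Finset ι) (hAB : Disjoint A B) (hA : A.card ≤ k) (hB : B.card ≤ k)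
    (a b : ι → ℝ) (ha : ∀ i ∈ A, 0 ≤ a i ∧ a i ≤ 1) (hb : ∀ j ∈ B, 0 ≤ b j ∧ b j ≤ 1)
    (hδ : 0 ≤ δ) :
    ‖∑ i ∈ A, ∑ j ∈ B, (a i : ℂ) * (b j : ℂ) * c i j‖
      ≤ δ * (Real.sqrt (∑ i ∈ A, a i) * Real.sqrt (∑ j ∈ B, b j)) := by
  classical
  set wa : Finset ι → ℝ := fun T => (∏ i ∈ T, a i) * ∏ i ∈ A \ T, (1 - a i) with hwa
  set wb : Finset ι → ℝ := fun U => (∏ j ∈ U, b j) * ∏ j ∈ B \ U, (1 - b j) with hwb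
  have hwa0 : ∀ T ∈ A.powerset, 0 ≤ wa T := by
    intro T hT
    have hTA := Finset.mem_powerset.mp hT
    exact mul_nonneg (Finset.prod_nonneg fun i hi => (ha i (hTA hi)).1)
      (Finset.prod_nonneg fun i hi => by
        have := (ha i (Finset.mem_sdiff.mp hi).1).2; linarith)
  have hwb0 : ∀ U ∈ B.powerset, 0 ≤ wb U := by
    intro U hU
    have hUB := Finset.mem_powerset.mp hU
    exact mul_nonneg (Finset.prod_nonneg fun j hj => (hb j (hUB hj)).1)
      (Finset.prod_nonneg fun j hj => by
        have := (hb j (Finset.mem_sdiff.mp hj).1).2; linarith)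
  -- identity: expand into indicator pieces
  have key : ∑ i ∈ A, ∑ j ∈ B, (a i : ℂ) * (b j : ℂ) * c i j
      = ∑ T ∈ A.powerset, (wa T : ℂ) *
          ∑ U ∈ B.powerset, (wb U : ℂ) * ∑ i ∈ T, ∑ j ∈ U, c i j := by
    have step1 : ∑ i ∈ A, ∑ j ∈ B, (a i : ℂ) * (b j : ℂ) * c i j
        = ∑ i ∈ A, (a i : ℂ) * ∑ j ∈ B, (b j : ℂ) * c i j := by
      refine Finset.sum_congr rfl fun i _ => ?_
      rw [Finset.mul_sum]
      exact Finset.sum_congr rfl fun j _ => by ring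
    rw [step1, ← expand_lin (fun i => (a i : ℂ)) (fun i => ∑ j ∈ B, (b j : ℂ) * c i j) A]
    refine Finset.sum_congr rfl fun T hT => ?_
    have inner : ∑ i ∈ T, ∑ j ∈ B, (b j : ℂ) * c i j
        = ∑ j ∈ B, (b j : ℂ) * ∑ i ∈ T, c i j := by
      rw [Finset.sum_comm]
      exact Finset.sum_congr rfl fun j _ => by rw [Finset.mul_sum]
    rw [inner, ← expand_lin (fun j => (b j : ℂ)) (fun j => ∑ i ∈ T, c i j) B]
    have cast1 : ((∏ i ∈ T, (a i : ℂ)) * ∏ i ∈ A \ T, (1 - (a i : ℂ)))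
        = ((wa T : ℂ)) := by push_cast [hwa]; ring
    rw [cast1]
    congr 1
    refine Finset.sum_congr rfl fun U hU => ?_
    have cast2 : ((∏ j ∈ U, (b j : ℂ)) * ∏ j ∈ B \ U, (1 - (b j : ℂ)))
        = ((wb U : ℂ)) := by push_cast [hwb]; ring
    rw [cast2]
    congr 1
    exact Finset.sum_comm
  rw [key]
  -- now bound
  have bound1 : ‖∑ T ∈ A.powerset, (wa T : ℂ) *
      ∑ U ∈ B.powerset, (wb U : ℂ) * ∑ i ∈ T, ∑ j ∈ U, c i j‖
      ≤ ∑ T ∈ A.powerset, wa T * ∑ U ∈ B.powerset, wb U *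
          (δ * (Real.sqrt (T.card) * Real.sqrt (U.card))) := by
    refine (norm_sum_le _ _).trans (Finset.sum_le_sum fun T hT => ?_)
    rw [norm_mul, Complex.norm_real, Real.norm_of_nonneg (hwa0 T hT)]
    refine mul_le_mul_of_nonneg_left ?_ (hwa0 T hT)
    refine (norm_sum_le _ _).trans (Finset.sum_le_sum fun U hU => ?_)
    rw [norm_mul, Complex.norm_real, Real.norm_of_nonneg (hwb0 U hU)]
    refine mul_le_mul_of_nonneg_left ?_ (hwb0 U hU)
    have hTA := Finset.mem_powerset.mp hT
    have hUB := Finset.mem_powerset.mp hU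
    have := H T U (hAB.mono hTA hUB) (le_trans (Finset.card_le_card hTA) hA)
      (le_trans (Finset.card_le_card hUB) hB)
    calc ‖∑ i ∈ T, ∑ j ∈ U, c i j‖ ≤ δ * Real.sqrt ((T.card : ℝ) * U.card) := this
      _ = δ * (Real.sqrt (T.card) * Real.sqrt (U.card)) := by
          rw [Real.sqrt_mul (Nat.cast_nonneg _)]
  refine bound1.trans ?_
  have rearr : ∑ T ∈ A.powerset, wa T * ∑ U ∈ B.powerset, wb U *
      (δ * (Real.sqrt (T.card) * Real.sqrt (U.card)))
      = δ * ((∑ T ∈ A.powerset, wa T * Real.sqrt (T.card)) *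
          (∑ U ∈ B.powerset, wb U * Real.sqrt (U.card))) := by
    rw [Finset.sum_mul_sum]
    rw [Finset.mul_sum]
    refine Finset.sum_congr rfl fun T _ => ?_
    rw [Finset.mul_sum, Finset.mul_sum]
    exact Finset.sum_congr rfl fun U _ => by ring
  rw [rearr]
  refine mul_le_mul_of_nonneg_left ?_ hδ
  -- each factor
  have hsum1 : ∑ T ∈ A.powerset, wa T = 1 := wgt_sum a A
  have hsum2 : ∑ U ∈ B.powerset, wb U = 1 := wgt_sum b B
  have hexp1 : ∑ T ∈ A.powerset, wa T * (T.card : ℝ) = ∑ i ∈ A, a i := by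
    have := expand_lin a (fun _ => (1 : ℝ)) A
    simpa using this
  have hexp2 : ∑ U ∈ B.powerset, wb U * (U.card : ℝ) = ∑ j ∈ B, b j := by
    have := expand_lin b (fun _ => (1 : ℝ)) B
    simpa using this
  have j1 : ∑ T ∈ A.powerset, wa T * Real.sqrt (T.card) ≤ Real.sqrt (∑ i ∈ A, a i) := by
    have := weighted_jensen A.powerset wa (fun T => (T.card : ℝ)) hwa0
      (fun T _ => Nat.cast_nonneg _) hsum1
    rwa [hexp1] at this
  have j2 : ∑ U ∈ B.powerset, wb U * Real.sqrt (U.card) ≤ Real.sqrt (∑ j ∈ B, b j) := by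
    have := weighted_jensen B.powerset wb (fun U => (U.card : ℝ)) hwb0
      (fun U _ => Nat.cast_nonneg _) hsum2
    rwa [hexp2] at this
  have n1 : 0 ≤ ∑ T ∈ A.powerset, wa T * Real.sqrt (T.card) :=
    Finset.sum_nonneg fun T hT => mul_nonneg (hwa0 T hT) (Real.sqrt_nonneg _)
  have n2 : 0 ≤ ∑ U ∈ B.powerset, wb U * Real.sqrt (U.card) :=
    Finset.sum_nonneg fun U hU => mul_nonneg (hwb0 U hU) (Real.sqrt_nonneg _)
  exact mul_le_mul j1 j2 n2 (Real.sqrt_nonneg _)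

lemma scaled_flat {k : ℕ} {δ : ℝ} (c : ι → ι → ℂ)
    (H : ∀ A B : Finset ι, Disjoint A B → A.card ≤ k → B.card ≤ k →
      ‖∑ i ∈ A, ∑ j ∈ B, c i j‖ ≤ δ * Real.sqrt ((A.card : ℝ) * B.card))
    (A B : Finset ι) (hAB : Disjoint A B) (hA : A.card ≤ k) (hB : B.card ≤ k)
    (a b : ι → ℝ) (m₁ m₂ : ℝ)
    (ha0 : ∀ i ∈ A, 0 ≤ a i) (ha1 : ∀ i ∈ A, a i ≤ m₁)
    (hb0 : ∀ j ∈ B, 0 ≤ b j) (hb1 : ∀ j ∈ B, b j ≤ m₂) (hδ : 0 ≤ δ) :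
    ‖∑ i ∈ A, ∑ j ∈ B, (a i : ℂ) * (b j : ℂ) * c i j‖
      ≤ δ * (Real.sqrt (m₁ * ∑ i ∈ A, a i) * Real.sqrt (m₂ * ∑ j ∈ B, b j)) := by
  classical
  have rhs0 : 0 ≤ δ * (Real.sqrt (m₁ * ∑ i ∈ A, a i) * Real.sqrt (m₂ * ∑ j ∈ B, b j)) :=
    mul_nonneg hδ (mul_nonneg (Real.sqrt_nonneg _) (Real.sqrt_nonneg _))
  rcases A.eq_empty_or_nonempty with rfl | hAne
  · simpa using rhs0
  rcases B.eq_empty_or_nonempty with rfl | hBne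
  · simpa using rhs0
  have hm₁0 : 0 ≤ m₁ := le_trans (ha0 _ hAne.choose_spec) (ha1 _ hAne.choose_spec)
  have hm₂0 : 0 ≤ m₂ := le_trans (hb0 _ hBne.choose_spec) (hb1 _ hBne.choose_spec)
  rcases eq_or_lt_of_le hm₁0 with rfl | hm₁
  · have : ∀ i ∈ A, a i = 0 := fun i hi => le_antisymm (ha1 i hi) (ha0 i hi)
    have z : ∑ i ∈ A, ∑ j ∈ B, (a i : ℂ) * (b j : ℂ) * c i j = 0 := by
      refine Finset.sum_eq_zero fun i hi => Finset.sum_eq_zero fun j _ => by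
        rw [this i hi]; simp
    rw [z, norm_zero]; exact rhs0
  rcases eq_or_lt_of_le hm₂0 with rfl | hm₂
  · have : ∀ j ∈ B, b j = 0 := fun j hj => le_antisymm (hb1 j hj) (hb0 j hj)
    have z : ∑ i ∈ A, ∑ j ∈ B, (a i : ℂ) * (b j : ℂ) * c i j = 0 := by
      refine Finset.sum_eq_zero fun i _ => Finset.sum_eq_zero fun j hj => by
        rw [this j hj]; simp
    rw [z, norm_zero]; exact rhs0
  have hm₁' : (m₁ : ℂ) ≠ 0 := by exact_mod_cast hm₁.ne'
  have hm₂' : (m₂ : ℂ) ≠ 0 := by exact_mod_cast hm₂.ne'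
  have factor : ∑ i ∈ A, ∑ j ∈ B, (a i : ℂ) * (b j : ℂ) * c i j
      = ((m₁ * m₂ : ℝ) : ℂ) *
        ∑ i ∈ A, ∑ j ∈ B, ((a i / m₁ : ℝ) : ℂ) * ((b j / m₂ : ℝ) : ℂ) * c i j := by
    rw [Finset.mul_sum]
    refine Finset.sum_congr rfl fun i _ => ?_
    rw [Finset.mul_sum]
    refine Finset.sum_congr rfl fun j _ => ?_
    push_cast
    field_simp
  have hcf := coeff_flat c H A B hAB hA hB (fun i => a i / m₁) (fun j => b j / m₂)
    (fun i hi => ⟨div_nonneg (ha0 i hi) hm₁0, (div_le_one hm₁).mpr (ha1 i hi)⟩)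
    (fun j hj => ⟨div_nonneg (hb0 j hj) hm₂0, (div_le_one hm₂).mpr (hb1 j hj)⟩) hδ
  rw [factor, norm_mul, Complex.norm_real, Real.norm_of_nonneg (mul_nonneg hm₁0 hm₂0)]
  have e1 : m₁ * Real.sqrt (∑ i ∈ A, a i / m₁) = Real.sqrt (m₁ * ∑ i ∈ A, a i) := by
    have t1 : m₁ * Real.sqrt (∑ i ∈ A, a i / m₁)
        = Real.sqrt (m₁ ^ 2 * ∑ i ∈ A, a i / m₁) := by
      rw [Real.sqrt_mul (sq_nonneg m₁), Real.sqrt_sq hm₁0]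
    rw [t1, ← Finset.sum_div]
    congr 1
    field_simp
  have e2 : m₂ * Real.sqrt (∑ j ∈ B, b j / m₂) = Real.sqrt (m₂ * ∑ j ∈ B, b j) := by
    have t1 : m₂ * Real.sqrt (∑ j ∈ B, b j / m₂)
        = Real.sqrt (m₂ ^ 2 * ∑ j ∈ B, b j / m₂) := by
      rw [Real.sqrt_mul (sq_nonneg m₂), Real.sqrt_sq hm₂0]
    rw [t1, ← Finset.sum_div]
    congr 1
    field_simp
  refine le_trans (mul_le_mul_of_nonneg_left hcf (mul_nonneg hm₁0 hm₂0)) (le_of_eq ?_)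
  calc m₁ * m₂ * (δ * (Real.sqrt (∑ i ∈ A, a i / m₁) * Real.sqrt (∑ j ∈ B, b j / m₂)))
      = δ * ((m₁ * Real.sqrt (∑ i ∈ A, a i / m₁)) * (m₂ * Real.sqrt (∑ j ∈ B, b j / m₂))) := by
        ring
    _ = δ * (Real.sqrt (m₁ * ∑ i ∈ A, a i) * Real.sqrt (m₂ * ∑ j ∈ B, b j)) := by
        rw [e1, e2]

lemma side_bound (L k : ℕ) (A : Finset ι) (hA : A.card ≤ k) (hL : (k : ℝ) ≤ ((2:ℝ) ^ L) ^ 2)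
    (u : ι → ℝ) (hu : ∀ i, 0 ≤ u i) (M : ℝ) (hM : M = Real.sqrt (∑ i ∈ A, u i ^ 2)) :
    ∑ t ∈ Finset.range (L + 1),
      Real.sqrt (M / 2 ^ t *
        ∑ i ∈ A.filter (fun i => Nat.findGreatest (fun r => u i * 2 ^ r ≤ M) L = t), u i)
      ≤ (Real.sqrt (2 * L) + 1) * M := by
  classical
  have hM0 : 0 ≤ M := hM ▸ Real.sqrt_nonneg _
  have hMsq : M ^ 2 = ∑ i ∈ A, u i ^ 2 := by
    rw [hM]; exact Real.sq_sqrt (Finset.sum_nonneg fun i _ => sq_nonneg _)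
  set lv : ι → ℕ := fun i => Nat.findGreatest (fun r => u i * 2 ^ r ≤ M) L with hlv
  set At : ℕ → Finset ι := fun t => A.filter (fun i => lv i = t) with hAt
  have hmem : ∀ t, ∀ i ∈ At t, u i * 2 ^ t ≤ M := by
    intro t i hi
    obtain ⟨hiA, hlvi⟩ := Finset.mem_filter.mp hi
    have huiM : u i ≤ M := by
      rw [hM]
      have h1 : u i ^ 2 ≤ ∑ i ∈ A, u i ^ 2 :=
        Finset.single_le_sum (f := fun i => u i ^ 2) (fun i _ => sq_nonneg _) hiA
      calc u i = Real.sqrt (u i ^ 2) := (Real.sqrt_sq (hu i)).symm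
        _ ≤ _ := Real.sqrt_le_sqrt h1
    have hP0 : u i * 2 ^ 0 ≤ M := by simpa using huiM
    have h2 := Nat.findGreatest_spec (P := fun r => u i * 2 ^ r ≤ M) (Nat.zero_le L) hP0
    have h3 : lv i = Nat.findGreatest (fun r => u i * 2 ^ r ≤ M) L := rfl
    rw [← h3, hlvi] at h2
    exact h2
  have hstrict : ∀ t, t < L → ∀ i ∈ At t, M < u i * 2 ^ (t + 1) := by
    intro t ht i hi
    obtain ⟨hiA, hlvi⟩ := Finset.mem_filter.mp hi
    have h1 : lv i < t + 1 := by omega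
    have h2 := Nat.findGreatest_is_greatest h1 (by omega)
    exact lt_of_not_ge h2
  have fibsub : ∑ t ∈ Finset.range L, ∑ i ∈ At t, u i ^ 2 ≤ M ^ 2 := by
    rw [hMsq]
    have hfib : ∑ t ∈ Finset.range (L + 1), ∑ i ∈ At t, u i ^ 2 = ∑ i ∈ A, u i ^ 2 :=
      Finset.sum_fiberwise_of_maps_to
        (fun i _ => Finset.mem_range.mpr (Nat.lt_succ_of_le (Nat.findGreatest_le L))) _
    calc ∑ t ∈ Finset.range L, ∑ i ∈ At t, u i ^ 2
        ≤ ∑ t ∈ Finset.range (L + 1), ∑ i ∈ At t, u i ^ 2 :=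
          Finset.sum_le_sum_of_subset_of_nonneg
            (Finset.range_subset_range.mpr (Nat.le_succ L))
            (fun t _ _ => Finset.sum_nonneg fun i _ => sq_nonneg _)
      _ = ∑ i ∈ A, u i ^ 2 := hfib
  rw [Finset.sum_range_succ]
  have tailb : Real.sqrt (M / 2 ^ L * ∑ i ∈ At L, u i) ≤ M := by
    have h1 : ∑ i ∈ At L, u i ≤ Real.sqrt k * M := by
      have e : ∑ i ∈ At L, u i = ∑ i ∈ At L, Real.sqrt (u i ^ 2) :=
        Finset.sum_congr rfl fun i _ => (Real.sqrt_sq (hu i)).symm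
      rw [e]
      refine (sum_sqrt_le _ _ fun i _ => sq_nonneg _).trans ?_
      refine mul_le_mul (Real.sqrt_le_sqrt ?_) ?_ (Real.sqrt_nonneg _) (Real.sqrt_nonneg _)
      · exact_mod_cast (Finset.card_le_card (Finset.filter_subset _ _)).trans hA
      · rw [hM]
        refine Real.sqrt_le_sqrt ?_
        exact Finset.sum_le_sum_of_subset_of_nonneg (Finset.filter_subset _ _)
          (fun i _ _ => sq_nonneg _)
    have hsk : Real.sqrt k ≤ 2 ^ L := by
      calc Real.sqrt k ≤ Real.sqrt (((2:ℝ) ^ L) ^ 2) := Real.sqrt_le_sqrt hL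
        _ = 2 ^ L := Real.sqrt_sq (by positivity)
    have h2 : M / 2 ^ L * ∑ i ∈ At L, u i ≤ M / 2 ^ L * (Real.sqrt k * M) := by
      refine mul_le_mul_of_nonneg_left h1 (by positivity)
    have h3 : M / 2 ^ L * (Real.sqrt k * M) ≤ M * M := by
      have hq : Real.sqrt k / 2 ^ L ≤ 1 := by
        rw [div_le_one (by positivity)]
        exact hsk
      have e : M / 2 ^ L * (Real.sqrt k * M) = M * M * (Real.sqrt k / 2 ^ L) := by ring
      rw [e]
      nlinarith [mul_nonneg hM0 hM0, mul_nonneg (mul_nonneg hM0 hM0) (le_of_lt (by positivity : (0:ℝ) < 1))]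
    calc Real.sqrt (M / 2 ^ L * ∑ i ∈ At L, u i) ≤ Real.sqrt (M * M) :=
          Real.sqrt_le_sqrt (h2.trans h3)
      _ = M := Real.sqrt_mul_self hM0
  have levb : ∑ t ∈ Finset.range L, Real.sqrt (M / 2 ^ t * ∑ i ∈ At t, u i)
      ≤ Real.sqrt (2 * L) * M := by
    have step : ∀ t ∈ Finset.range L, Real.sqrt (M / 2 ^ t * ∑ i ∈ At t, u i)
        ≤ Real.sqrt 2 * Real.sqrt (∑ i ∈ At t, u i ^ 2) := by
      intro t ht
      rw [← Real.sqrt_mul (by norm_num)]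
      refine Real.sqrt_le_sqrt ?_
      have hpt : ∀ i ∈ At t, M / 2 ^ t * u i ≤ 2 * u i ^ 2 := by
        intro i hi
        have h1 := hstrict t (Finset.mem_range.mp ht) i hi
        have h2 : (0:ℝ) < 2 ^ t := by positivity
        have h3 := hu i
        rw [div_mul_eq_mul_div, div_le_iff₀ h2]
        calc M * u i ≤ (u i * 2 ^ (t + 1)) * u i := by nlinarith
          _ = 2 * u i ^ 2 * 2 ^ t := by rw [pow_succ]; ring
      calc M / 2 ^ t * ∑ i ∈ At t, u i = ∑ i ∈ At t, M / 2 ^ t * u i :=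
            Finset.mul_sum _ _ _
        _ ≤ ∑ i ∈ At t, 2 * u i ^ 2 := Finset.sum_le_sum hpt
        _ = 2 * ∑ i ∈ At t, u i ^ 2 := (Finset.mul_sum _ _ _).symm
    refine (Finset.sum_le_sum step).trans ?_
    rw [← Finset.mul_sum]
    have hcs := sum_sqrt_le (Finset.range L) (fun t => ∑ i ∈ At t, u i ^ 2)
      (fun t _ => Finset.sum_nonneg fun i _ => sq_nonneg _)
    have h4 : Real.sqrt (∑ t ∈ Finset.range L, ∑ i ∈ At t, u i ^ 2) ≤ M := by
      calc Real.sqrt (∑ t ∈ Finset.range L, ∑ i ∈ At t, u i ^ 2)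
          ≤ Real.sqrt (M ^ 2) := Real.sqrt_le_sqrt fibsub
        _ = M := Real.sqrt_sq hM0
    have h5 : ∑ t ∈ Finset.range L, Real.sqrt (∑ i ∈ At t, u i ^ 2)
        ≤ Real.sqrt L * M := by
      refine hcs.trans ?_
      simp only [Finset.card_range]
      exact mul_le_mul_of_nonneg_left h4 (Real.sqrt_nonneg _)
    calc Real.sqrt 2 * ∑ t ∈ Finset.range L, Real.sqrt (∑ i ∈ At t, u i ^ 2)
        ≤ Real.sqrt 2 * (Real.sqrt L * M) :=
          mul_le_mul_of_nonneg_left h5 (Real.sqrt_nonneg _)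
      _ = Real.sqrt (2 * L) * M := by
          rw [Real.sqrt_mul (by norm_num : (0:ℝ) ≤ 2), mul_assoc]
  calc ∑ t ∈ Finset.range L, Real.sqrt (M / 2 ^ t * ∑ i ∈ At t, u i)
        + Real.sqrt (M / 2 ^ L * ∑ i ∈ At L, u i)
      ≤ Real.sqrt (2 * L) * M + M := add_le_add levb tailb
    _ = (Real.sqrt (2 * L) + 1) * M := by ring

lemma nonneg_core {k : ℕ} {δ : ℝ} (c : ι → ι → ℂ)
    (H : ∀ A B : Finset ι, Disjoint A B → A.card ≤ k → B.card ≤ k →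
      ‖∑ i ∈ A, ∑ j ∈ B, c i j‖ ≤ δ * Real.sqrt ((A.card : ℝ) * B.card))
    (hδ : 0 ≤ δ)
    (A B : Finset ι) (hAB : Disjoint A B) (hA : A.card ≤ k) (hB : B.card ≤ k)
    (u v : ι → ℝ) (hu : ∀ i, 0 ≤ u i) (hv : ∀ j, 0 ≤ v j) :
    ‖∑ i ∈ A, ∑ j ∈ B, (u i : ℂ) * (v j : ℂ) * c i j‖
      ≤ δ * ((Real.sqrt (2 * (Nat.clog 4 k)) + 1) ^ 2 *
        (Real.sqrt (∑ i ∈ A, u i ^ 2) * Real.sqrt (∑ j ∈ B, v j ^ 2))) := by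
  classical
  set L := Nat.clog 4 k with hLdef
  have hL : (k : ℝ) ≤ ((2:ℝ) ^ L) ^ 2 := by
    have h1 : k ≤ 4 ^ L := Nat.le_pow_clog (by norm_num) k
    have h2 : (4:ℕ) ^ L = (2 ^ L) ^ 2 := by
      rw [show (4:ℕ) = 2 ^ 2 from rfl, ← pow_mul, ← pow_mul, Nat.mul_comm]
    calc (k:ℝ) ≤ ((4:ℕ) ^ L : ℕ) := by exact_mod_cast h1
      _ = ((2:ℝ) ^ L) ^ 2 := by rw [h2]; push_cast; ring
  set M := Real.sqrt (∑ i ∈ A, u i ^ 2) with hMdef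
  set M' := Real.sqrt (∑ j ∈ B, v j ^ 2) with hM'def
  have hM0 : 0 ≤ M := Real.sqrt_nonneg _
  have hM'0 : 0 ≤ M' := Real.sqrt_nonneg _
  set lva : ι → ℕ := fun i => Nat.findGreatest (fun r => u i * 2 ^ r ≤ M) L with hlva
  set lvb : ι → ℕ := fun j => Nat.findGreatest (fun r => v j * 2 ^ r ≤ M') L with hlvb
  set At : ℕ → Finset ι := fun t => A.filter (fun i => lva i = t) with hAt
  set Bt : ℕ → Finset ι := fun t => B.filter (fun j => lvb j = t) with hBt
  -- decompose the double sum into fibers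
  have split : ∑ i ∈ A, ∑ j ∈ B, (u i : ℂ) * (v j : ℂ) * c i j
      = ∑ t ∈ Finset.range (L + 1), ∑ τ ∈ Finset.range (L + 1),
          ∑ i ∈ At t, ∑ j ∈ Bt τ, (u i : ℂ) * (v j : ℂ) * c i j := by
    have hmapsA : ∀ i ∈ A, lva i ∈ Finset.range (L + 1) :=
      fun i _ => Finset.mem_range.mpr (Nat.lt_succ_of_le (Nat.findGreatest_le L))
    have hmapsB : ∀ j ∈ B, lvb j ∈ Finset.range (L + 1) :=
      fun j _ => Finset.mem_range.mpr (Nat.lt_succ_of_le (Nat.findGreatest_le L))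
    calc ∑ i ∈ A, ∑ j ∈ B, (u i : ℂ) * (v j : ℂ) * c i j
        = ∑ t ∈ Finset.range (L + 1), ∑ i ∈ At t, ∑ j ∈ B, (u i : ℂ) * (v j : ℂ) * c i j :=
          (Finset.sum_fiberwise_of_maps_to hmapsA
            (fun i => ∑ j ∈ B, (u i : ℂ) * (v j : ℂ) * c i j)).symm
      _ = ∑ t ∈ Finset.range (L + 1), ∑ i ∈ At t, ∑ τ ∈ Finset.range (L + 1),
            ∑ j ∈ Bt τ, (u i : ℂ) * (v j : ℂ) * c i j := by
          refine Finset.sum_congr rfl fun t _ => Finset.sum_congr rfl fun i _ => ?_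
          exact (Finset.sum_fiberwise_of_maps_to hmapsB
            (fun j => (u i : ℂ) * (v j : ℂ) * c i j)).symm
      _ = ∑ t ∈ Finset.range (L + 1), ∑ τ ∈ Finset.range (L + 1),
            ∑ i ∈ At t, ∑ j ∈ Bt τ, (u i : ℂ) * (v j : ℂ) * c i j := by
          exact Finset.sum_congr rfl fun t _ => Finset.sum_comm
  have hmemA : ∀ t, ∀ i ∈ At t, u i ≤ M / 2 ^ t := by
    intro t i hi
    obtain ⟨hiA, hlvi⟩ := Finset.mem_filter.mp hi
    have huiM : u i ≤ M := by
      rw [hMdef]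
      have h1 : u i ^ 2 ≤ ∑ i ∈ A, u i ^ 2 :=
        Finset.single_le_sum (f := fun i => u i ^ 2) (fun i _ => sq_nonneg _) hiA
      calc u i = Real.sqrt (u i ^ 2) := (Real.sqrt_sq (hu i)).symm
        _ ≤ _ := Real.sqrt_le_sqrt h1
    have hP0 : u i * 2 ^ 0 ≤ M := by simpa using huiM
    have h2 := Nat.findGreatest_spec (P := fun r => u i * 2 ^ r ≤ M) (Nat.zero_le L) hP0
    have h3 : lva i = Nat.findGreatest (fun r => u i * 2 ^ r ≤ M) L := rfl
    rw [← h3, hlvi] at h2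
    rw [le_div_iff₀ (by positivity : (0:ℝ) < 2 ^ t)]
    exact h2
  have hmemB : ∀ τ, ∀ j ∈ Bt τ, v j ≤ M' / 2 ^ τ := by
    intro τ j hj
    obtain ⟨hjB, hlvj⟩ := Finset.mem_filter.mp hj
    have hvjM : v j ≤ M' := by
      rw [hM'def]
      have h1 : v j ^ 2 ≤ ∑ j ∈ B, v j ^ 2 :=
        Finset.single_le_sum (f := fun j => v j ^ 2) (fun j _ => sq_nonneg _) hjB
      calc v j = Real.sqrt (v j ^ 2) := (Real.sqrt_sq (hv j)).symm
        _ ≤ _ := Real.sqrt_le_sqrt h1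
    have hP0 : v j * 2 ^ 0 ≤ M' := by simpa using hvjM
    have h2 := Nat.findGreatest_spec (P := fun r => v j * 2 ^ r ≤ M') (Nat.zero_le L) hP0
    have h3 : lvb j = Nat.findGreatest (fun r => v j * 2 ^ r ≤ M') L := rfl
    rw [← h3, hlvj] at h2
    rw [le_div_iff₀ (by positivity : (0:ℝ) < 2 ^ τ)]
    exact h2
  rw [split]
  have bnd : ∀ t ∈ Finset.range (L + 1), ∀ τ ∈ Finset.range (L + 1),
      ‖∑ i ∈ At t, ∑ j ∈ Bt τ, (u i : ℂ) * (v j : ℂ) * c i j‖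
        ≤ δ * (Real.sqrt (M / 2 ^ t * ∑ i ∈ At t, u i) *
            Real.sqrt (M' / 2 ^ τ * ∑ j ∈ Bt τ, v j)) := by
    intro t _ τ _
    refine scaled_flat c H (At t) (Bt τ)
      (hAB.mono (Finset.filter_subset _ _) (Finset.filter_subset _ _))
      ((Finset.card_le_card (Finset.filter_subset _ _)).trans hA)
      ((Finset.card_le_card (Finset.filter_subset _ _)).trans hB)
      u v (M / 2 ^ t) (M' / 2 ^ τ)
      (fun i _ => hu i) (hmemA t) (fun j _ => hv j) (hmemB τ) hδ
  have tri : ‖∑ t ∈ Finset.range (L + 1), ∑ τ ∈ Finset.range (L + 1),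
      ∑ i ∈ At t, ∑ j ∈ Bt τ, (u i : ℂ) * (v j : ℂ) * c i j‖
      ≤ ∑ t ∈ Finset.range (L + 1), ∑ τ ∈ Finset.range (L + 1),
          δ * (Real.sqrt (M / 2 ^ t * ∑ i ∈ At t, u i) *
            Real.sqrt (M' / 2 ^ τ * ∑ j ∈ Bt τ, v j)) := by
    refine (norm_sum_le _ _).trans (Finset.sum_le_sum fun t ht => ?_)
    exact (norm_sum_le _ _).trans (Finset.sum_le_sum fun τ hτ => bnd t ht τ hτ)
  refine tri.trans ?_
  have rearr : ∑ t ∈ Finset.range (L + 1), ∑ τ ∈ Finset.range (L + 1),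
      δ * (Real.sqrt (M / 2 ^ t * ∑ i ∈ At t, u i) *
        Real.sqrt (M' / 2 ^ τ * ∑ j ∈ Bt τ, v j))
      = δ * ((∑ t ∈ Finset.range (L + 1), Real.sqrt (M / 2 ^ t * ∑ i ∈ At t, u i)) *
          (∑ τ ∈ Finset.range (L + 1), Real.sqrt (M' / 2 ^ τ * ∑ j ∈ Bt τ, v j))) := by
    rw [Finset.sum_mul_sum, Finset.mul_sum]
    refine Finset.sum_congr rfl fun t _ => ?_
    rw [Finset.mul_sum, Finset.mul_sum]
  rw [rearr]
  have sA := side_bound L k A hA hL u hu M hMdef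
  have sB := side_bound L k B hB hL v hv M' hM'def
  have nA : 0 ≤ ∑ t ∈ Finset.range (L + 1), Real.sqrt (M / 2 ^ t * ∑ i ∈ At t, u i) :=
    Finset.sum_nonneg fun t _ => Real.sqrt_nonneg _
  have nB : 0 ≤ ∑ τ ∈ Finset.range (L + 1), Real.sqrt (M' / 2 ^ τ * ∑ j ∈ Bt τ, v j) :=
    Finset.sum_nonneg fun τ _ => Real.sqrt_nonneg _
  refine le_trans (mul_le_mul_of_nonneg_left
    (mul_le_mul sA sB nB (by positivity)) hδ) (le_of_eq ?_)
  ring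

lemma max_sq_add (r : ℝ) : max r 0 ^ 2 + max (-r) 0 ^ 2 = r ^ 2 := by
  rcases le_total r 0 with h | h
  · rw [max_eq_right h, max_eq_left (neg_nonneg.mpr h)]; ring
  · rw [max_eq_left h, max_eq_right (neg_nonpos.mpr h)]; ring

lemma four_sqrt (c₁ c₂ c₃ c₄ : ℝ) (h1 : 0 ≤ c₁) (h2 : 0 ≤ c₂) (h3 : 0 ≤ c₃) (h4 : 0 ≤ c₄) :
    Real.sqrt c₁ + Real.sqrt c₂ + Real.sqrt c₃ + Real.sqrt c₄
      ≤ 2 * Real.sqrt (c₁ + c₂ + c₃ + c₄) := by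
  set a := Real.sqrt c₁; set b := Real.sqrt c₂; set d := Real.sqrt c₃; set e := Real.sqrt c₄
  have ha : a ^ 2 = c₁ := Real.sq_sqrt h1
  have hb : b ^ 2 = c₂ := Real.sq_sqrt h2
  have hd : d ^ 2 = c₃ := Real.sq_sqrt h3
  have he : e ^ 2 = c₄ := Real.sq_sqrt h4
  have hsum : (a + b + d + e) ^ 2 ≤ 4 * (c₁ + c₂ + c₃ + c₄) := by
    nlinarith [sq_nonneg (a - b), sq_nonneg (a - d), sq_nonneg (a - e),
      sq_nonneg (b - d), sq_nonneg (b - e), sq_nonneg (d - e)]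
  have hpos : 0 ≤ a + b + d + e := by positivity
  calc a + b + d + e = Real.sqrt ((a + b + d + e) ^ 2) := (Real.sqrt_sq hpos).symm
    _ ≤ Real.sqrt (4 * (c₁ + c₂ + c₃ + c₄)) := Real.sqrt_le_sqrt hsum
    _ = 2 * Real.sqrt (c₁ + c₂ + c₃ + c₄) := by
        rw [Real.sqrt_mul (by norm_num : (0:ℝ) ≤ 4), show Real.sqrt 4 = 2 by
          rw [show (4:ℝ) = 2 ^ 2 by norm_num, Real.sqrt_sq (by norm_num : (0:ℝ) ≤ 2)]]

lemma sum_split4 {α : Type*} (A : Finset α) (f₁ f₂ f₃ f₄ : α → ℂ) :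
    ∑ a ∈ A, (f₁ a - f₂ a - f₃ a * Complex.I + f₄ a * Complex.I)
      = ∑ a ∈ A, f₁ a - ∑ a ∈ A, f₂ a - (∑ a ∈ A, f₃ a) * Complex.I
        + (∑ a ∈ A, f₄ a) * Complex.I := by
  rw [Finset.sum_add_distrib, Finset.sum_sub_distrib, Finset.sum_sub_distrib,
    ← Finset.sum_mul, ← Finset.sum_mul]

lemma norm_sq_complex (z : ℂ) : ‖z‖ ^ 2 = z.re ^ 2 + z.im ^ 2 := by
  rw [Complex.sq_norm, Complex.normSq_apply]; ring

lemma mixed_core {k : ℕ} {δ : ℝ} (c : ι → ι → ℂ)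
    (H : ∀ A B : Finset ι, Disjoint A B → A.card ≤ k → B.card ≤ k →
      ‖∑ i ∈ A, ∑ j ∈ B, c i j‖ ≤ δ * Real.sqrt ((A.card : ℝ) * B.card))
    (hδ : 0 ≤ δ)
    (A B : Finset ι) (hAB : Disjoint A B) (hA : A.card ≤ k) (hB : B.card ≤ k)
    (u : ι → ℝ) (hu : ∀ i, 0 ≤ u i) (y : ι → ℂ) :
    ‖∑ i ∈ A, ∑ j ∈ B, (u i : ℂ) * (starRingEnd ℂ) (y j) * c i j‖
      ≤ δ * ((Real.sqrt (2 * (Nat.clog 4 k)) + 1) ^ 2 *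
        (Real.sqrt (∑ i ∈ A, u i ^ 2) * (2 * Real.sqrt (∑ j ∈ B, ‖y j‖ ^ 2)))) := by
  classical
  set q₁ : ι → ℝ := fun j => max (y j).re 0 with hq₁
  set q₂ : ι → ℝ := fun j => max (-(y j).re) 0 with hq₂
  set q₃ : ι → ℝ := fun j => max (y j).im 0 with hq₃
  set q₄ : ι → ℝ := fun j => max (-(y j).im) 0 with hq₄
  have hdec : ∀ j, (starRingEnd ℂ) (y j)
      = ((q₁ j : ℂ) - (q₂ j : ℂ)) - ((q₃ j : ℂ) - (q₄ j : ℂ)) * Complex.I := by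
    intro j
    have e1 : q₁ j - q₂ j = (y j).re := by
      simp only [hq₁, hq₂]
      rcases le_total ((y j).re) 0 with h | h
      · rw [max_eq_right h, max_eq_left (neg_nonneg.mpr h)]; ring
      · rw [max_eq_left h, max_eq_right (neg_nonpos.mpr h)]; ring
    have e2 : q₃ j - q₄ j = (y j).im := by
      simp only [hq₃, hq₄]
      rcases le_total ((y j).im) 0 with h | h
      · rw [max_eq_right h, max_eq_left (neg_nonneg.mpr h)]; ring
      · rw [max_eq_left h, max_eq_right (neg_nonpos.mpr h)]; ring
    apply Complex.ext
    · simp [Complex.conj_re, e1]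
    · simp [Complex.conj_im, e2]
  have expand : ∑ i ∈ A, ∑ j ∈ B, (u i : ℂ) * (starRingEnd ℂ) (y j) * c i j
      = (∑ i ∈ A, ∑ j ∈ B, (u i : ℂ) * (q₁ j : ℂ) * c i j)
        - (∑ i ∈ A, ∑ j ∈ B, (u i : ℂ) * (q₂ j : ℂ) * c i j)
        - (∑ i ∈ A, ∑ j ∈ B, (u i : ℂ) * (q₃ j : ℂ) * c i j) * Complex.I
        + (∑ i ∈ A, ∑ j ∈ B, (u i : ℂ) * (q₄ j : ℂ) * c i j) * Complex.I := by
    rw [← sum_split4 A]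
    refine Finset.sum_congr rfl fun i _ => ?_
    rw [← sum_split4 B]
    refine Finset.sum_congr rfl fun j _ => ?_
    rw [hdec j]
    ring
  rw [expand]
  set K := (Real.sqrt (2 * (Nat.clog 4 k)) + 1) ^ 2 with hK
  have hK0 : 0 ≤ K := sq_nonneg _
  set W := Real.sqrt (∑ i ∈ A, u i ^ 2) with hW
  have hW0 : 0 ≤ W := Real.sqrt_nonneg _
  have b1 := nonneg_core c H hδ A B hAB hA hB u q₁ hu (fun j => le_max_right _ _)
  have b2 := nonneg_core c H hδ A B hAB hA hB u q₂ hu (fun j => le_max_right _ _)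
  have b3 := nonneg_core c H hδ A B hAB hA hB u q₃ hu (fun j => le_max_right _ _)
  have b4 := nonneg_core c H hδ A B hAB hA hB u q₄ hu (fun j => le_max_right _ _)
  have tri : ‖(∑ i ∈ A, ∑ j ∈ B, (u i : ℂ) * (q₁ j : ℂ) * c i j)
        - (∑ i ∈ A, ∑ j ∈ B, (u i : ℂ) * (q₂ j : ℂ) * c i j)
        - (∑ i ∈ A, ∑ j ∈ B, (u i : ℂ) * (q₃ j : ℂ) * c i j) * Complex.I
        + (∑ i ∈ A, ∑ j ∈ B, (u i : ℂ) * (q₄ j : ℂ) * c i j) * Complex.I‖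
      ≤ δ * (K * (W * (Real.sqrt (∑ j ∈ B, q₁ j ^ 2) + Real.sqrt (∑ j ∈ B, q₂ j ^ 2)
          + Real.sqrt (∑ j ∈ B, q₃ j ^ 2) + Real.sqrt (∑ j ∈ B, q₄ j ^ 2)))) := by
    have step : ∀ z₁ z₂ z₃ z₄ : ℂ, ‖z₁ - z₂ - z₃ * Complex.I + z₄ * Complex.I‖
        ≤ ‖z₁‖ + ‖z₂‖ + ‖z₃‖ + ‖z₄‖ := by
      intro z₁ z₂ z₃ z₄
      calc ‖z₁ - z₂ - z₃ * Complex.I + z₄ * Complex.I‖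
          ≤ ‖z₁ - z₂ - z₃ * Complex.I‖ + ‖z₄ * Complex.I‖ := norm_add_le _ _
        _ ≤ (‖z₁ - z₂‖ + ‖z₃ * Complex.I‖) + ‖z₄ * Complex.I‖ := by
            gcongr; exact norm_sub_le _ _
        _ ≤ ((‖z₁‖ + ‖z₂‖) + ‖z₃ * Complex.I‖) + ‖z₄ * Complex.I‖ := by
            gcongr; exact norm_sub_le _ _
        _ = ‖z₁‖ + ‖z₂‖ + ‖z₃‖ + ‖z₄‖ := by
            rw [norm_mul, norm_mul, Complex.norm_I, mul_one, mul_one]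
    refine (step _ _ _ _).trans ?_
    calc ‖∑ i ∈ A, ∑ j ∈ B, (u i : ℂ) * (q₁ j : ℂ) * c i j‖
          + ‖∑ i ∈ A, ∑ j ∈ B, (u i : ℂ) * (q₂ j : ℂ) * c i j‖
          + ‖∑ i ∈ A, ∑ j ∈ B, (u i : ℂ) * (q₃ j : ℂ) * c i j‖
          + ‖∑ i ∈ A, ∑ j ∈ B, (u i : ℂ) * (q₄ j : ℂ) * c i j‖
        ≤ δ * (K * (W * Real.sqrt (∑ j ∈ B, q₁ j ^ 2)))
          + δ * (K * (W * Real.sqrt (∑ j ∈ B, q₂ j ^ 2)))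
          + δ * (K * (W * Real.sqrt (∑ j ∈ B, q₃ j ^ 2)))
          + δ * (K * (W * Real.sqrt (∑ j ∈ B, q₄ j ^ 2))) := by
          have r1 : δ * (K * (W * Real.sqrt (∑ j ∈ B, q₁ j ^ 2)))
              = δ * (K * (Real.sqrt (∑ i ∈ A, u i ^ 2) * Real.sqrt (∑ j ∈ B, q₁ j ^ 2))) := by
            rw [hW]
          exact add_le_add (add_le_add (add_le_add (by rw [r1]; exact b1)
            (by rw [hW]; exact b2)) (by rw [hW]; exact b3)) (by rw [hW]; exact b4)
      _ = δ * (K * (W * (Real.sqrt (∑ j ∈ B, q₁ j ^ 2) + Real.sqrt (∑ j ∈ B, q₂ j ^ 2)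
          + Real.sqrt (∑ j ∈ B, q₃ j ^ 2) + Real.sqrt (∑ j ∈ B, q₄ j ^ 2)))) := by ring
  refine tri.trans ?_
  have foursum : Real.sqrt (∑ j ∈ B, q₁ j ^ 2) + Real.sqrt (∑ j ∈ B, q₂ j ^ 2)
      + Real.sqrt (∑ j ∈ B, q₃ j ^ 2) + Real.sqrt (∑ j ∈ B, q₄ j ^ 2)
      ≤ 2 * Real.sqrt (∑ j ∈ B, ‖y j‖ ^ 2) := by
    have e : ∑ j ∈ B, q₁ j ^ 2 + ∑ j ∈ B, q₂ j ^ 2 + ∑ j ∈ B, q₃ j ^ 2 + ∑ j ∈ B, q₄ j ^ 2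
        = ∑ j ∈ B, ‖y j‖ ^ 2 := by
      rw [← Finset.sum_add_distrib, ← Finset.sum_add_distrib, ← Finset.sum_add_distrib]
      refine Finset.sum_congr rfl fun j _ => ?_
      rw [norm_sq_complex]
      have e1 := max_sq_add ((y j).re)
      have e2 := max_sq_add ((y j).im)
      simp only [hq₁, hq₂, hq₃, hq₄]
      linarith
    have := four_sqrt (∑ j ∈ B, q₁ j ^ 2) (∑ j ∈ B, q₂ j ^ 2)
      (∑ j ∈ B, q₃ j ^ 2) (∑ j ∈ B, q₄ j ^ 2)
      (Finset.sum_nonneg fun j _ => sq_nonneg _) (Finset.sum_nonneg fun j _ => sq_nonneg _)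
      (Finset.sum_nonneg fun j _ => sq_nonneg _) (Finset.sum_nonneg fun j _ => sq_nonneg _)
    rwa [e] at this
  calc δ * (K * (W * (Real.sqrt (∑ j ∈ B, q₁ j ^ 2) + Real.sqrt (∑ j ∈ B, q₂ j ^ 2)
        + Real.sqrt (∑ j ∈ B, q₃ j ^ 2) + Real.sqrt (∑ j ∈ B, q₄ j ^ 2))))
      ≤ δ * (K * (W * (2 * Real.sqrt (∑ j ∈ B, ‖y j‖ ^ 2)))) := by
        refine mul_le_mul_of_nonneg_left (mul_le_mul_of_nonneg_left
          (mul_le_mul_of_nonneg_left foursum hW0) hK0) hδ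
    _ = δ * (K * (W * (2 * Real.sqrt (∑ j ∈ B, ‖y j‖ ^ 2)))) := rfl

lemma complex_core {k : ℕ} {δ : ℝ} (c : ι → ι → ℂ)
    (H : ∀ A B : Finset ι, Disjoint A B → A.card ≤ k → B.card ≤ k →
      ‖∑ i ∈ A, ∑ j ∈ B, c i j‖ ≤ δ * Real.sqrt ((A.card : ℝ) * B.card))
    (hδ : 0 ≤ δ)
    (A B : Finset ι) (hAB : Disjoint A B) (hA : A.card ≤ k) (hB : B.card ≤ k)
    (x y : ι → ℂ) :
    ‖∑ i ∈ A, ∑ j ∈ B, x i * (starRingEnd ℂ) (y j) * c i j‖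
      ≤ δ * ((Real.sqrt (2 * (Nat.clog 4 k)) + 1) ^ 2 *
        (4 * (Real.sqrt (∑ i ∈ A, ‖x i‖ ^ 2) * Real.sqrt (∑ j ∈ B, ‖y j‖ ^ 2)))) := by
  classical
  set p₁ : ι → ℝ := fun i => max (x i).re 0 with hp₁
  set p₂ : ι → ℝ := fun i => max (-(x i).re) 0 with hp₂
  set p₃ : ι → ℝ := fun i => max (x i).im 0 with hp₃
  set p₄ : ι → ℝ := fun i => max (-(x i).im) 0 with hp₄
  have hdec : ∀ i, x i = ((p₁ i : ℂ) - (p₂ i : ℂ)) + ((p₃ i : ℂ) - (p₄ i : ℂ)) * Complex.I := by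
    intro i
    have e1 : p₁ i - p₂ i = (x i).re := by
      simp only [hp₁, hp₂]
      rcases le_total ((x i).re) 0 with h | h
      · rw [max_eq_right h, max_eq_left (neg_nonneg.mpr h)]; ring
      · rw [max_eq_left h, max_eq_right (neg_nonpos.mpr h)]; ring
    have e2 : p₃ i - p₄ i = (x i).im := by
      simp only [hp₃, hp₄]
      rcases le_total ((x i).im) 0 with h | h
      · rw [max_eq_right h, max_eq_left (neg_nonneg.mpr h)]; ring
      · rw [max_eq_left h, max_eq_right (neg_nonpos.mpr h)]; ring
    apply Complex.ext
    · simp [e1]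
    · simp [e2]
  have expand : ∑ i ∈ A, ∑ j ∈ B, x i * (starRingEnd ℂ) (y j) * c i j
      = (∑ i ∈ A, ∑ j ∈ B, (p₁ i : ℂ) * (starRingEnd ℂ) (y j) * c i j)
        - (∑ i ∈ A, ∑ j ∈ B, (p₂ i : ℂ) * (starRingEnd ℂ) (y j) * c i j)
        - (∑ i ∈ A, ∑ j ∈ B, (p₄ i : ℂ) * (starRingEnd ℂ) (y j) * c i j) * Complex.I
        + (∑ i ∈ A, ∑ j ∈ B, (p₃ i : ℂ) * (starRingEnd ℂ) (y j) * c i j) * Complex.I := by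
    rw [← sum_split4 A]
    refine Finset.sum_congr rfl fun i _ => ?_
    rw [← sum_split4 B]
    refine Finset.sum_congr rfl fun j _ => ?_
    rw [hdec i]
    ring
  rw [expand]
  set K := (Real.sqrt (2 * (Nat.clog 4 k)) + 1) ^ 2 with hK
  have hK0 : 0 ≤ K := sq_nonneg _
  set Y := Real.sqrt (∑ j ∈ B, ‖y j‖ ^ 2) with hY
  have hY0 : 0 ≤ Y := Real.sqrt_nonneg _
  have b1 := mixed_core c H hδ A B hAB hA hB p₁ (fun i => le_max_right _ _) y
  have b2 := mixed_core c H hδ A B hAB hA hB p₂ (fun i => le_max_right _ _) y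
  have b3 := mixed_core c H hδ A B hAB hA hB p₃ (fun i => le_max_right _ _) y
  have b4 := mixed_core c H hδ A B hAB hA hB p₄ (fun i => le_max_right _ _) y
  have step : ∀ z₁ z₂ z₃ z₄ : ℂ, ‖z₁ - z₂ - z₃ * Complex.I + z₄ * Complex.I‖
      ≤ ‖z₁‖ + ‖z₂‖ + ‖z₃‖ + ‖z₄‖ := by
    intro z₁ z₂ z₃ z₄
    calc ‖z₁ - z₂ - z₃ * Complex.I + z₄ * Complex.I‖
        ≤ ‖z₁ - z₂ - z₃ * Complex.I‖ + ‖z₄ * Complex.I‖ := norm_add_le _ _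
      _ ≤ (‖z₁ - z₂‖ + ‖z₃ * Complex.I‖) + ‖z₄ * Complex.I‖ := by
          gcongr; exact norm_sub_le _ _
      _ ≤ ((‖z₁‖ + ‖z₂‖) + ‖z₃ * Complex.I‖) + ‖z₄ * Complex.I‖ := by
          gcongr; exact norm_sub_le _ _
      _ = ‖z₁‖ + ‖z₂‖ + ‖z₃‖ + ‖z₄‖ := by
          rw [norm_mul, norm_mul, Complex.norm_I, mul_one, mul_one]
  refine (step _ _ _ _).trans ?_
  have tot : ‖∑ i ∈ A, ∑ j ∈ B, (p₁ i : ℂ) * (starRingEnd ℂ) (y j) * c i j‖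
      + ‖∑ i ∈ A, ∑ j ∈ B, (p₂ i : ℂ) * (starRingEnd ℂ) (y j) * c i j‖
      + ‖∑ i ∈ A, ∑ j ∈ B, (p₄ i : ℂ) * (starRingEnd ℂ) (y j) * c i j‖
      + ‖∑ i ∈ A, ∑ j ∈ B, (p₃ i : ℂ) * (starRingEnd ℂ) (y j) * c i j‖
      ≤ δ * (K * ((Real.sqrt (∑ i ∈ A, p₁ i ^ 2) + Real.sqrt (∑ i ∈ A, p₂ i ^ 2)
          + Real.sqrt (∑ i ∈ A, p₄ i ^ 2) + Real.sqrt (∑ i ∈ A, p₃ i ^ 2)) * (2 * Y))) := by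
    have r : ∀ w : ι → ℝ, δ * (K * (Real.sqrt (∑ i ∈ A, w i ^ 2) * (2 * Y)))
        = δ * (K * (Real.sqrt (∑ i ∈ A, w i ^ 2) * (2 * Real.sqrt (∑ j ∈ B, ‖y j‖ ^ 2)))) := by
      intro w; rw [hY]
    calc ‖∑ i ∈ A, ∑ j ∈ B, (p₁ i : ℂ) * (starRingEnd ℂ) (y j) * c i j‖
        + ‖∑ i ∈ A, ∑ j ∈ B, (p₂ i : ℂ) * (starRingEnd ℂ) (y j) * c i j‖
        + ‖∑ i ∈ A, ∑ j ∈ B, (p₄ i : ℂ) * (starRingEnd ℂ) (y j) * c i j‖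
        + ‖∑ i ∈ A, ∑ j ∈ B, (p₃ i : ℂ) * (starRingEnd ℂ) (y j) * c i j‖
        ≤ δ * (K * (Real.sqrt (∑ i ∈ A, p₁ i ^ 2) * (2 * Y)))
          + δ * (K * (Real.sqrt (∑ i ∈ A, p₂ i ^ 2) * (2 * Y)))
          + δ * (K * (Real.sqrt (∑ i ∈ A, p₄ i ^ 2) * (2 * Y)))
          + δ * (K * (Real.sqrt (∑ i ∈ A, p₃ i ^ 2) * (2 * Y))) := by
          exact add_le_add (add_le_add (add_le_add (by rw [r p₁]; exact b1)
            (by rw [r p₂]; exact b2)) (by rw [r p₄]; exact b4)) (by rw [r p₃]; exact b3)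
      _ = δ * (K * ((Real.sqrt (∑ i ∈ A, p₁ i ^ 2) + Real.sqrt (∑ i ∈ A, p₂ i ^ 2)
          + Real.sqrt (∑ i ∈ A, p₄ i ^ 2) + Real.sqrt (∑ i ∈ A, p₃ i ^ 2)) * (2 * Y))) := by
          ring
  refine tot.trans ?_
  have foursum : Real.sqrt (∑ i ∈ A, p₁ i ^ 2) + Real.sqrt (∑ i ∈ A, p₂ i ^ 2)
      + Real.sqrt (∑ i ∈ A, p₄ i ^ 2) + Real.sqrt (∑ i ∈ A, p₃ i ^ 2)
      ≤ 2 * Real.sqrt (∑ i ∈ A, ‖x i‖ ^ 2) := by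
    have e : ∑ i ∈ A, p₁ i ^ 2 + ∑ i ∈ A, p₂ i ^ 2 + ∑ i ∈ A, p₄ i ^ 2 + ∑ i ∈ A, p₃ i ^ 2
        = ∑ i ∈ A, ‖x i‖ ^ 2 := by
      rw [← Finset.sum_add_distrib, ← Finset.sum_add_distrib, ← Finset.sum_add_distrib]
      refine Finset.sum_congr rfl fun i _ => ?_
      rw [norm_sq_complex]
      have e1 := max_sq_add ((x i).re)
      have e2 := max_sq_add ((x i).im)
      simp only [hp₁, hp₂, hp₃, hp₄]
      linarith
    have := four_sqrt (∑ i ∈ A, p₁ i ^ 2) (∑ i ∈ A, p₂ i ^ 2)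
      (∑ i ∈ A, p₄ i ^ 2) (∑ i ∈ A, p₃ i ^ 2)
      (Finset.sum_nonneg fun i _ => sq_nonneg _) (Finset.sum_nonneg fun i _ => sq_nonneg _)
      (Finset.sum_nonneg fun i _ => sq_nonneg _) (Finset.sum_nonneg fun i _ => sq_nonneg _)
    refine this.trans (le_of_eq ?_)
    rw [← e]
  calc δ * (K * ((Real.sqrt (∑ i ∈ A, p₁ i ^ 2) + Real.sqrt (∑ i ∈ A, p₂ i ^ 2)
        + Real.sqrt (∑ i ∈ A, p₄ i ^ 2) + Real.sqrt (∑ i ∈ A, p₃ i ^ 2)) * (2 * Y)))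
      ≤ δ * (K * ((2 * Real.sqrt (∑ i ∈ A, ‖x i‖ ^ 2)) * (2 * Y))) := by
        refine mul_le_mul_of_nonneg_left (mul_le_mul_of_nonneg_left
          (mul_le_mul_of_nonneg_right foursum (by positivity)) hK0) hδ
    _ = δ * (K * (4 * (Real.sqrt (∑ i ∈ A, ‖x i‖ ^ 2) * Y))) := by ring

lemma diag_core {k : ℕ} {δ : ℝ} (c : ι → ι → ℂ)
    (H : ∀ A B : Finset ι, Disjoint A B → A.card ≤ k → B.card ≤ k →
      ‖∑ i ∈ A, ∑ j ∈ B, c i j‖ ≤ δ * Real.sqrt ((A.card : ℝ) * B.card))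
    (hδ : 0 ≤ δ)
    (A : Finset ι) (hA : A.card ≤ k) (x : ι → ℂ) :
    ‖∑ i ∈ A, ∑ j ∈ A.erase i, x i * (starRingEnd ℂ) (x j) * c i j‖
      ≤ δ * ((Real.sqrt (2 * (Nat.clog 4 k)) + 1) ^ 2 *
        (8 * ∑ i ∈ A, ‖x i‖ ^ 2)) := by
  classical
  set K := (Real.sqrt (2 * (Nat.clog 4 k)) + 1) ^ 2 with hK
  have hK0 : 0 ≤ K := sq_nonneg _
  set n := A.card with hn
  have id1 := powerset_pair_sum A (fun i j => x i * (starRingEnd ℂ) (x j) * c i j)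
  set E := ∑ i ∈ A, ∑ j ∈ A.erase i, x i * (starRingEnd ℂ) (x j) * c i j with hE
  set Sf := ∑ T ∈ A.powerset, ∑ i ∈ T, ∑ j ∈ A \ T, x i * (starRingEnd ℂ) (x j) * c i j
    with hSf
  have nid : (2:ℝ) ^ n * ‖E‖ = 4 * ‖Sf‖ := by
    have e1 : ‖(2:ℂ) ^ n * E‖ = (2:ℝ) ^ n * ‖E‖ := by
      rw [norm_mul, norm_pow, Complex.norm_ofNat]
    have e2 : ‖(4:ℂ) * Sf‖ = 4 * ‖Sf‖ := by
      rw [norm_mul, Complex.norm_ofNat]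
    rw [← e1, ← e2, ← id1]
  -- bound each piece
  have piece : ∀ T ∈ A.powerset,
      ‖∑ i ∈ T, ∑ j ∈ A \ T, x i * (starRingEnd ℂ) (x j) * c i j‖
        ≤ δ * (K * (2 * (∑ i ∈ T, ‖x i‖ ^ 2 + ∑ j ∈ A \ T, ‖x j‖ ^ 2))) := by
    intro T hT
    have hTA := Finset.mem_powerset.mp hT
    have hdisj : Disjoint T (A \ T) := Finset.disjoint_sdiff
    have hcT : T.card ≤ k := (Finset.card_le_card hTA).trans hA
    have hcAT : (A \ T).card ≤ k := (Finset.card_le_card (Finset.sdiff_subset)).trans hA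
    have hb := complex_core c H hδ T (A \ T) hdisj hcT hcAT x x
    refine hb.trans ?_
    refine mul_le_mul_of_nonneg_left (mul_le_mul_of_nonneg_left ?_ hK0) hδ
    have am : Real.sqrt (∑ i ∈ T, ‖x i‖ ^ 2) * Real.sqrt (∑ j ∈ A \ T, ‖x j‖ ^ 2)
        ≤ (∑ i ∈ T, ‖x i‖ ^ 2 + ∑ j ∈ A \ T, ‖x j‖ ^ 2) / 2 := by
      have h1 : 0 ≤ ∑ i ∈ T, ‖x i‖ ^ 2 := Finset.sum_nonneg fun i _ => sq_nonneg _
      have h2 : 0 ≤ ∑ j ∈ A \ T, ‖x j‖ ^ 2 := Finset.sum_nonneg fun j _ => sq_nonneg _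
      nlinarith [sq_nonneg (Real.sqrt (∑ i ∈ T, ‖x i‖ ^ 2)
        - Real.sqrt (∑ j ∈ A \ T, ‖x j‖ ^ 2)), Real.sq_sqrt h1, Real.sq_sqrt h2,
        Real.sqrt_nonneg (∑ i ∈ T, ‖x i‖ ^ 2), Real.sqrt_nonneg (∑ j ∈ A \ T, ‖x j‖ ^ 2)]
    linarith
  have sumbound : ‖Sf‖ ≤ δ * (K * (2 * (2 ^ n * ∑ i ∈ A, ‖x i‖ ^ 2))) := by
    refine (norm_sum_le _ _).trans ?_
    refine (Finset.sum_le_sum piece).trans ?_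
    have e1 : ∑ T ∈ A.powerset, δ * (K * (2 * (∑ i ∈ T, ‖x i‖ ^ 2 + ∑ j ∈ A \ T, ‖x j‖ ^ 2)))
        = δ * (K * (2 * ∑ T ∈ A.powerset, (∑ i ∈ T, ‖x i‖ ^ 2 + ∑ j ∈ A \ T, ‖x j‖ ^ 2))) := by
      rw [← Finset.mul_sum, ← Finset.mul_sum, ← Finset.mul_sum]
    rw [e1]
    refine mul_le_mul_of_nonneg_left (mul_le_mul_of_nonneg_left ?_ hK0) hδ
    rw [Finset.sum_add_distrib]
    have e2 := powerset_half_sum A (fun i => ‖x i‖ ^ 2)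
    have e3 := powerset_half_sum_compl A (fun i => ‖x i‖ ^ 2)
    nlinarith [e2, e3]
  have h2n : (0:ℝ) < 2 ^ n := by positivity
  have final : (2:ℝ) ^ n * ‖E‖ ≤ (2:ℝ) ^ n * (δ * (K * (8 * ∑ i ∈ A, ‖x i‖ ^ 2))) := by
    rw [nid]
    calc 4 * ‖Sf‖ ≤ 4 * (δ * (K * (2 * (2 ^ n * ∑ i ∈ A, ‖x i‖ ^ 2)))) := by linarith
      _ = (2:ℝ) ^ n * (δ * (K * (8 * ∑ i ∈ A, ‖x i‖ ^ 2))) := by ring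
  exact le_of_mul_le_mul_left final h2n

lemma partition_lemma (k : ℕ) : ∀ (m : ℕ) (S : Finset ι), S.card ≤ m * k →
    ∃ P : ℕ → Finset ι, (∀ p, P p ⊆ S) ∧ (∀ p, (P p).card ≤ k) ∧
      (∀ p q, p ≠ q → Disjoint (P p) (P q)) ∧ S = (Finset.range m).biUnion P := by
  intro m
  induction m with
  | zero =>
    intro S hS
    have : S = ∅ := Finset.card_eq_zero.mp (Nat.le_zero.mp (by simpa using hS))
    exact ⟨fun _ => ∅, fun _ => by simp, fun _ => by simp, fun _ _ _ => by simp,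
      by simp [this]⟩
  | succ m ih =>
    intro S hS
    obtain ⟨T, hTS, hTcard⟩ := Finset.exists_subset_card_eq
      (n := min k S.card) (s := S) (min_le_right _ _)
    have hT_le : T.card ≤ k := hTcard ▸ min_le_left _ _
    have hS' : (S \ T).card ≤ m * k := by
      rw [Finset.card_sdiff_of_subset hTS, hTcard]
      rcases le_total k S.card with h | h
      · rw [min_eq_left h]
        rw [Nat.succ_mul] at hS
        omega
      · rw [min_eq_right h]
        omega
    obtain ⟨P', hsub, hcard, hdisj, hun⟩ := ih (S \ T) hS'
    refine ⟨fun p => if p = m then T else P' p, ?_, ?_, ?_, ?_⟩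
    · intro p
      by_cases hp : p = m
      · simp [hp, hTS]
      · simp only [if_neg hp]
        exact (hsub p).trans (Finset.sdiff_subset)
    · intro p
      by_cases hp : p = m
      · simp [hp, hT_le]
      · simp only [if_neg hp]; exact hcard p
    · intro p q hpq
      by_cases hp : p = m
      · by_cases hq : q = m
        · exact absurd (hp.trans hq.symm) hpq
        · simp only [if_pos hp, if_neg hq]
          exact (Finset.disjoint_sdiff.mono_right (hsub q))
      · by_cases hq : q = m
        · simp only [if_neg hp, if_pos hq]
          exact ((Finset.disjoint_sdiff.mono_right (hsub p)).symm)
        · simp only [if_neg hp, if_neg hq]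
          exact hdisj p q hpq
    · rw [Finset.range_add_one, Finset.biUnion_insert, if_pos rfl]
      have e : (Finset.range m).biUnion (fun p => if p = m then T else P' p)
          = (Finset.range m).biUnion P' := by
        refine Finset.biUnion_congr rfl fun p hp => ?_
        rw [if_neg (by have := Finset.mem_range.mp hp; omega)]
      rw [e, ← hun]
      exact (Finset.union_sdiff_of_subset hTS).symm

lemma global_bound {k : ℕ} {δ : ℝ} (c : ι → ι → ℂ)
    (H : ∀ A B : Finset ι, Disjoint A B → A.card ≤ k → B.card ≤ k →
      ‖∑ i ∈ A, ∑ j ∈ B, c i j‖ ≤ δ * Real.sqrt ((A.card : ℝ) * B.card))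
    (hδ : 0 ≤ δ) (m : ℕ) (S : Finset ι) (hS : S.card ≤ m * k) (x : ι → ℂ) :
    ‖∑ i ∈ S, ∑ j ∈ S.erase i, x i * (starRingEnd ℂ) (x j) * c i j‖
      ≤ δ * ((Real.sqrt (2 * (Nat.clog 4 k)) + 1) ^ 2 *
        (4 * (m + 1) * ∑ i ∈ S, ‖x i‖ ^ 2)) := by
  classical
  obtain ⟨P, hsub, hcard, hdisj, hun⟩ := partition_lemma k m S hS
  set K := (Real.sqrt (2 * (Nat.clog 4 k)) + 1) ^ 2 with hK
  have hK0 : 0 ≤ K := sq_nonneg _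
  have hpd : (↑(Finset.range m) : Set ℕ).PairwiseDisjoint P :=
    fun p _ q _ hpq => hdisj p q hpq
  have hpd' : ∀ i : ι, (↑(Finset.range m) : Set ℕ).PairwiseDisjoint
      (fun q => (P q).erase i) :=
    fun i p _ q _ hpq => ((hdisj p q hpq).mono (Finset.erase_subset _ _)
      (Finset.erase_subset _ _))
  have herase : ∀ i : ι, S.erase i = (Finset.range m).biUnion (fun q => (P q).erase i) := by
    intro i
    rw [hun]
    ext j
    simp only [Finset.mem_erase, Finset.mem_biUnion]
    tauto
  have split : ∑ i ∈ S, ∑ j ∈ S.erase i, x i * (starRingEnd ℂ) (x j) * c i j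
      = ∑ p ∈ Finset.range m, ∑ q ∈ Finset.range m,
          ∑ i ∈ P p, ∑ j ∈ (P q).erase i, x i * (starRingEnd ℂ) (x j) * c i j := by
    calc ∑ i ∈ S, ∑ j ∈ S.erase i, x i * (starRingEnd ℂ) (x j) * c i j
        = ∑ p ∈ Finset.range m, ∑ i ∈ P p,
            ∑ j ∈ S.erase i, x i * (starRingEnd ℂ) (x j) * c i j := by
          rw [hun] at *
          exact Finset.sum_biUnion hpd
      _ = ∑ p ∈ Finset.range m, ∑ i ∈ P p, ∑ q ∈ Finset.range m,
            ∑ j ∈ (P q).erase i, x i * (starRingEnd ℂ) (x j) * c i j := by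
          refine Finset.sum_congr rfl fun p _ => Finset.sum_congr rfl fun i _ => ?_
          rw [herase i]
          exact Finset.sum_biUnion (hpd' i)
      _ = ∑ p ∈ Finset.range m, ∑ q ∈ Finset.range m,
            ∑ i ∈ P p, ∑ j ∈ (P q).erase i, x i * (starRingEnd ℂ) (x j) * c i j :=
          Finset.sum_congr rfl fun p _ => Finset.sum_comm
  rw [split]
  set σ : ℕ → ℝ := fun p => ∑ i ∈ P p, ‖x i‖ ^ 2 with hσ
  have hσ0 : ∀ p, 0 ≤ σ p := fun p => Finset.sum_nonneg fun i _ => sq_nonneg _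
  have hσtot : ∑ p ∈ Finset.range m, σ p = ∑ i ∈ S, ‖x i‖ ^ 2 := by
    rw [hun]
    exact (Finset.sum_biUnion hpd).symm
  have hbnd : ∀ p ∈ Finset.range m, ∀ q ∈ Finset.range m,
      ‖∑ i ∈ P p, ∑ j ∈ (P q).erase i, x i * (starRingEnd ℂ) (x j) * c i j‖
        ≤ δ * (K * (4 * (Real.sqrt (σ p) * Real.sqrt (σ q))))
          + (if p = q then δ * (K * (4 * σ p)) else 0) := by
    intro p _ q _
    by_cases hpq : p = q
    · subst hpq
      rw [if_pos rfl]
      have h := diag_core c H hδ (P p) (hcard p) x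
      refine h.trans (le_of_eq ?_)
      have hss : Real.sqrt (σ p) * Real.sqrt (σ p) = σ p := Real.mul_self_sqrt (hσ0 p)
      rw [hss]
      ring
    · rw [if_neg hpq]
      have heq : ∑ i ∈ P p, ∑ j ∈ (P q).erase i, x i * (starRingEnd ℂ) (x j) * c i j
          = ∑ i ∈ P p, ∑ j ∈ P q, x i * (starRingEnd ℂ) (x j) * c i j := by
        refine Finset.sum_congr rfl fun i hi => ?_
        rw [Finset.erase_eq_of_notMem (Finset.disjoint_left.mp (hdisj p q hpq) hi)]
      rw [heq]
      have h := complex_core c H hδ (P p) (P q) (hdisj p q hpq) (hcard p) (hcard q) x x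
      refine h.trans (le_of_eq ?_)
      ring
  have tri : ‖∑ p ∈ Finset.range m, ∑ q ∈ Finset.range m,
      ∑ i ∈ P p, ∑ j ∈ (P q).erase i, x i * (starRingEnd ℂ) (x j) * c i j‖
      ≤ ∑ p ∈ Finset.range m, ∑ q ∈ Finset.range m,
          (δ * (K * (4 * (Real.sqrt (σ p) * Real.sqrt (σ q))))
            + (if p = q then δ * (K * (4 * σ p)) else 0)) := by
    refine (norm_sum_le _ _).trans (Finset.sum_le_sum fun p hp => ?_)
    exact (norm_sum_le _ _).trans (Finset.sum_le_sum fun q hq => hbnd p hp q hq)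
  refine tri.trans ?_
  -- compute the sums
  have inner : ∀ p ∈ Finset.range m, ∑ q ∈ Finset.range m,
      (δ * (K * (4 * (Real.sqrt (σ p) * Real.sqrt (σ q))))
        + (if p = q then δ * (K * (4 * σ p)) else 0))
      = (δ * (K * (4 * Real.sqrt (σ p)))) * (∑ q ∈ Finset.range m, Real.sqrt (σ q))
        + δ * (K * (4 * σ p)) := by
    intro p hp
    rw [Finset.sum_add_distrib]
    congr 1
    · have e : ∀ q ∈ Finset.range m, δ * (K * (4 * (Real.sqrt (σ p) * Real.sqrt (σ q))))
          = (δ * (K * (4 * Real.sqrt (σ p)))) * Real.sqrt (σ q) := fun q _ => by ring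
      rw [Finset.sum_congr rfl e, ← Finset.mul_sum]
    · rw [Finset.sum_ite_eq (Finset.range m) p (fun _ => δ * (K * (4 * σ p))), if_pos hp]
  rw [Finset.sum_congr rfl inner, Finset.sum_add_distrib]
  have e2 : ∑ p ∈ Finset.range m, (δ * (K * (4 * Real.sqrt (σ p))))
      * (∑ q ∈ Finset.range m, Real.sqrt (σ q))
      = δ * (K * (4 * ((∑ p ∈ Finset.range m, Real.sqrt (σ p)) *
          (∑ q ∈ Finset.range m, Real.sqrt (σ q))))) := by
    rw [← Finset.sum_mul]
    have e : ∑ p ∈ Finset.range m, δ * (K * (4 * Real.sqrt (σ p)))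
        = δ * (K * (4 * ∑ p ∈ Finset.range m, Real.sqrt (σ p))) := by
      rw [← Finset.mul_sum, ← Finset.mul_sum, ← Finset.mul_sum]
    rw [e]
    ring
  have e3 : ∑ p ∈ Finset.range m, δ * (K * (4 * σ p))
      = δ * (K * (4 * ∑ p ∈ Finset.range m, σ p)) := by
    rw [← Finset.mul_sum, ← Finset.mul_sum, ← Finset.mul_sum]
  rw [e2, e3, hσtot]
  -- Cauchy-Schwarz on the block norms
  set X := ∑ p ∈ Finset.range m, Real.sqrt (σ p) with hX
  have hX0 : 0 ≤ X := Finset.sum_nonneg fun p _ => Real.sqrt_nonneg _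
  have hXle : X * X ≤ (m : ℝ) * ∑ i ∈ S, ‖x i‖ ^ 2 := by
    have h1 := sum_sqrt_le (Finset.range m) σ (fun p _ => hσ0 p)
    rw [Finset.card_range, hσtot] at h1
    have h2 : X * X ≤ (Real.sqrt m * Real.sqrt (∑ i ∈ S, ‖x i‖ ^ 2))
        * (Real.sqrt m * Real.sqrt (∑ i ∈ S, ‖x i‖ ^ 2)) :=
      mul_le_mul h1 h1 hX0 (by positivity)
    refine h2.trans (le_of_eq ?_)
    rw [show Real.sqrt (m:ℝ) * Real.sqrt (∑ i ∈ S, ‖x i‖ ^ 2)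
        * (Real.sqrt (m:ℝ) * Real.sqrt (∑ i ∈ S, ‖x i‖ ^ 2))
        = (Real.sqrt (m:ℝ) * Real.sqrt (m:ℝ))
          * (Real.sqrt (∑ i ∈ S, ‖x i‖ ^ 2) * Real.sqrt (∑ i ∈ S, ‖x i‖ ^ 2)) by ring,
      Real.mul_self_sqrt (Nat.cast_nonneg m),
      Real.mul_self_sqrt (Finset.sum_nonneg fun i _ => sq_nonneg _)]
  have hδK : 0 ≤ δ * (K * 4) := by positivity
  calc δ * (K * (4 * (X * X))) + δ * (K * (4 * ∑ i ∈ S, ‖x i‖ ^ 2))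
      ≤ δ * (K * (4 * ((m : ℝ) * ∑ i ∈ S, ‖x i‖ ^ 2)))
        + δ * (K * (4 * ∑ i ∈ S, ‖x i‖ ^ 2)) := by
        have := mul_le_mul_of_nonneg_left hXle
          (mul_nonneg hδ (mul_nonneg hK0 (by norm_num : (0:ℝ) ≤ 4)))
        nlinarith [hXle, hδ, hK0]
    _ = δ * (K * (4 * ((m : ℝ) + 1) * ∑ i ∈ S, ‖x i‖ ^ 2)) := by ring

lemma num_bound (k s : ℕ) (hk : 2 ^ 10 ≤ k) (hs : 1 ≤ s) :
    (Real.sqrt (2 * (Nat.clog 4 k)) + 1) ^ 2 * (4 * (2 * (s:ℝ) + 1))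
      ≤ 44 * s * Real.log k := by
  set L := Nat.clog 4 k with hL
  have hk2 : 2 ≤ k := le_trans (by norm_num) hk
  have hL5 : 5 ≤ L := by
    have h1 : (4:ℕ) ^ 4 < k := lt_of_lt_of_le (by norm_num) hk
    have := (Nat.lt_clog_iff_pow_lt (by norm_num : 1 < 4)).mpr h1
    omega
  have hL5' : (5:ℝ) ≤ (L:ℝ) := by exact_mod_cast hL5
  have hlog2 : (0.6931471803:ℝ) < Real.log 2 := Real.log_two_gt_d9
  have hy : (6.931471803:ℝ) ≤ Real.log k := by
    have h1 : ((2:ℝ) ^ 10) ≤ (k:ℝ) := by exact_mod_cast hk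
    have h2 : Real.log ((2:ℝ) ^ 10) ≤ Real.log k := Real.log_le_log (by positivity) h1
    rw [Real.log_pow] at h2
    push_cast at h2
    nlinarith
  have hLy : 1.386 * ((L:ℝ) - 1) ≤ Real.log k := by
    have h1 : (4:ℕ) ^ (L - 1) < k := by
      rw [hL]
      exact Nat.pow_pred_clog_lt_self (by norm_num) (by omega)
    have h2 : ((4:ℝ)) ^ ((L:ℝ) - 1) ≤ (k:ℝ) := by
      have : ((4:ℕ) ^ (L - 1) : ℝ) ≤ (k:ℝ) := by exact_mod_cast h1.le
      rwa [show ((4:ℕ) ^ (L - 1) : ℝ) = (4:ℝ) ^ ((L:ℝ) - 1) by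
        push_cast
        rw [← Real.rpow_natCast (4:ℝ) (L-1), Nat.cast_sub (by omega)]
        norm_num] at this
    have h3 : Real.log ((4:ℝ) ^ ((L:ℝ) - 1)) ≤ Real.log k :=
      Real.log_le_log (Real.rpow_pos_of_pos (by norm_num) _) h2
    rw [Real.log_rpow (by norm_num : (0:ℝ) < 4)] at h3
    have h4 : Real.log 4 = 2 * Real.log 2 := by
      rw [show (4:ℝ) = 2 ^ 2 by norm_num, Real.log_pow]
      push_cast; ring
    have h5 : (1.386:ℝ) ≤ Real.log 4 := by rw [h4]; nlinarith
    nlinarith [h3, h5, hL5']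
  -- bound K
  have ha : Real.sqrt (2 * (L:ℝ)) ^ 2 = 2 * (L:ℝ) := Real.sq_sqrt (by positivity)
  have hb : Real.sqrt (2 * (L:ℝ)) ≤ (2/3) * (L:ℝ) := by
    have h1 : 2 * (L:ℝ) ≤ ((2/3) * (L:ℝ)) ^ 2 := by nlinarith
    calc Real.sqrt (2 * (L:ℝ)) ≤ Real.sqrt (((2/3) * (L:ℝ)) ^ 2) := Real.sqrt_le_sqrt h1
      _ = (2/3) * (L:ℝ) := Real.sqrt_sq (by positivity)
  have hK : (Real.sqrt (2 * (L:ℝ)) + 1) ^ 2 ≤ (10/3) * (L:ℝ) + 1 := by nlinarith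
  have hs' : (1:ℝ) ≤ (s:ℝ) := by exact_mod_cast hs
  have key1 : (40:ℝ) * (L:ℝ) + 12 ≤ 44 * Real.log k := by linarith
  have hK0 : (0:ℝ) ≤ (Real.sqrt (2 * (L:ℝ)) + 1) ^ 2 := sq_nonneg _
  calc (Real.sqrt (2 * (L:ℝ)) + 1) ^ 2 * (4 * (2 * (s:ℝ) + 1))
      ≤ ((10/3) * (L:ℝ) + 1) * (4 * (2 * (s:ℝ) + 1)) := by
        refine mul_le_mul_of_nonneg_right hK (by positivity)
    _ ≤ ((10/3) * (L:ℝ) + 1) * (12 * (s:ℝ)) := by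
        refine mul_le_mul_of_nonneg_left (by linarith) (by positivity)
    _ = (s:ℝ) * (40 * (L:ℝ) + 12) := by ring
    _ ≤ (s:ℝ) * (44 * Real.log k) := by
        refine mul_le_mul_of_nonneg_left key1 (by positivity)
    _ = 44 * s * Real.log k := by ring


end AuxRIP

open Finset in
theorem stmt4 (n N k s : ℕ) (hk : 2 ^ 10 ≤ k) (hs : 1 ≤ s)
    (Φ : Matrix (Fin n) (Fin N) ℂ) (δ : ℝ) (hδ : 0 ≤ δ)
    (hunit : ∀ j : Fin N, ∑ i : Fin n, ‖Φ i j‖ ^ 2 = 1)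
    (hflat : ∀ J₁ J₂ : Finset (Fin N), Disjoint J₁ J₂ →
      J₁.card ≤ k → J₂.card ≤ k →
      ‖∑ j₁ ∈ J₁, ∑ j₂ ∈ J₂, ∑ i : Fin n, Φ i j₁ * (starRingEnd ℂ) (Φ i j₂)‖ ≤
        δ * Real.sqrt (J₁.card * J₂.card)) :
    ∀ x : Fin N → ℂ, (Finset.univ.filter (fun j => x j ≠ 0)).card ≤ 2 * s * k →
      (1 - 44 * s * δ * Real.log k) * ∑ j : Fin N, ‖x j‖ ^ 2 ≤
          ∑ i : Fin n, ‖Φ.mulVec x i‖ ^ 2 ∧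
        ∑ i : Fin n, ‖Φ.mulVec x i‖ ^ 2 ≤
          (1 + 44 * s * δ * Real.log k) * ∑ j : Fin N, ‖x j‖ ^ 2 := by
  intro x hx
  classical
  set c : Fin N → Fin N → ℂ := fun i j => ∑ r : Fin n, Φ r i * (starRingEnd ℂ) (Φ r j)
    with hc
  have H : ∀ A B : Finset (Fin N), Disjoint A B → A.card ≤ k → B.card ≤ k →
      ‖∑ i ∈ A, ∑ j ∈ B, c i j‖ ≤ δ * Real.sqrt ((A.card : ℝ) * B.card) := by
    intro A B hd hA hB
    exact hflat A B hd hA hB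
  set S := Finset.univ.filter (fun j => x j ≠ 0) with hSdef
  set σ := ∑ j : Fin N, ‖x j‖ ^ 2 with hσdef
  have hσ0 : 0 ≤ σ := Finset.sum_nonneg fun j _ => sq_nonneg _
  have hxS : ∀ i : Fin N, i ∉ S → x i = 0 := by
    intro i hi
    by_contra hne
    exact hi (Finset.mem_filter.mpr ⟨Finset.mem_univ i, hne⟩)
  -- Step 1: expansion of the quadratic form
  have step1 : (↑(∑ i : Fin n, ‖Φ.mulVec x i‖ ^ 2) : ℂ)
      = ∑ i : Fin N, ∑ j : Fin N, x i * (starRingEnd ℂ) (x j) * c i j := by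
    have e0 : ∀ r : Fin n, ((‖Φ.mulVec x r‖ ^ 2 : ℝ) : ℂ)
        = (Φ.mulVec x r) * (starRingEnd ℂ) (Φ.mulVec x r) := by
      intro r
      rw [Complex.mul_conj, Complex.normSq_eq_norm_sq]
    have e1 : ∀ r : Fin n, Φ.mulVec x r = ∑ j : Fin N, Φ r j * x j := by
      intro r
      simp [Matrix.mulVec, dotProduct]
    calc (↑(∑ i : Fin n, ‖Φ.mulVec x i‖ ^ 2) : ℂ)
        = ∑ r : Fin n, ((‖Φ.mulVec x r‖ ^ 2 : ℝ) : ℂ) := by push_cast; ring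
      _ = ∑ r : Fin n, (Φ.mulVec x r) * (starRingEnd ℂ) (Φ.mulVec x r) :=
          Finset.sum_congr rfl fun r _ => e0 r
      _ = ∑ r : Fin n, ∑ i : Fin N, ∑ j : Fin N,
            (x i * (starRingEnd ℂ) (x j)) * (Φ r i * (starRingEnd ℂ) (Φ r j)) := by
          refine Finset.sum_congr rfl fun r _ => ?_
          rw [e1 r, map_sum, Finset.sum_mul_sum]
          refine Finset.sum_congr rfl fun i _ => Finset.sum_congr rfl fun j _ => ?_
          rw [map_mul]
          ring
      _ = ∑ i : Fin N, ∑ j : Fin N, x i * (starRingEnd ℂ) (x j) * c i j := by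
          rw [Finset.sum_comm]
          refine Finset.sum_congr rfl fun i _ => ?_
          rw [Finset.sum_comm]
          refine Finset.sum_congr rfl fun j _ => ?_
          rw [← Finset.mul_sum]
  -- Step 2: extract the diagonal
  have hcii : ∀ i : Fin N, c i i = 1 := by
    intro i
    calc c i i = ∑ r : Fin n, ((‖Φ r i‖ ^ 2 : ℝ) : ℂ) := by
          refine Finset.sum_congr rfl fun r _ => ?_
          rw [Complex.mul_conj, Complex.normSq_eq_norm_sq]
      _ = ((∑ r : Fin n, ‖Φ r i‖ ^ 2 : ℝ) : ℂ) := by push_cast; ring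
      _ = 1 := by rw [hunit i]; norm_num
  have step2 : ∑ i : Fin N, ∑ j : Fin N, x i * (starRingEnd ℂ) (x j) * c i j
      = (↑σ : ℂ) + ∑ i : Fin N, ∑ j ∈ Finset.univ.erase i,
          x i * (starRingEnd ℂ) (x j) * c i j := by
    have e2 : ∀ i : Fin N, ∑ j : Fin N, x i * (starRingEnd ℂ) (x j) * c i j
        = ((‖x i‖ ^ 2 : ℝ) : ℂ) + ∑ j ∈ Finset.univ.erase i,
            x i * (starRingEnd ℂ) (x j) * c i j := by
      intro i
      rw [← Finset.add_sum_erase Finset.univ _ (Finset.mem_univ i)]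
      congr 1
      rw [hcii i, mul_one, Complex.mul_conj, Complex.normSq_eq_norm_sq]
    rw [Finset.sum_congr rfl fun i _ => e2 i, Finset.sum_add_distrib]
    congr 1
    rw [hσdef]
    push_cast
    ring
  -- Step 3: restrict to the support
  have step3 : ∑ i : Fin N, ∑ j ∈ Finset.univ.erase i,
      x i * (starRingEnd ℂ) (x j) * c i j
      = ∑ i ∈ S, ∑ j ∈ S.erase i, x i * (starRingEnd ℂ) (x j) * c i j := by
    have hout : ∑ i ∈ S, (∑ j ∈ Finset.univ.erase i, x i * (starRingEnd ℂ) (x j) * c i j)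
        = ∑ i : Fin N, ∑ j ∈ Finset.univ.erase i, x i * (starRingEnd ℂ) (x j) * c i j := by
      refine Finset.sum_subset (Finset.subset_univ S) ?_
      intro i _ hiS
      refine Finset.sum_eq_zero fun j _ => ?_
      rw [hxS i hiS]
      ring
    rw [← hout]
    refine Finset.sum_congr rfl fun i hi => ?_
    refine (Finset.sum_subset (Finset.erase_subset_erase i (Finset.subset_univ S)) ?_).symm
    intro j hj hjS
    have hjne : j ≠ i := (Finset.mem_erase.mp hj).1
    have hjnotS : j ∉ S := fun hmem => hjS (Finset.mem_erase.mpr ⟨hjne, hmem⟩)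
    rw [hxS j hjnotS]
    simp
  set E := ∑ i ∈ S, ∑ j ∈ S.erase i, x i * (starRingEnd ℂ) (x j) * c i j with hE
  have hid : (∑ i : Fin n, ‖Φ.mulVec x i‖ ^ 2) = σ + E.re := by
    have hchain : (↑(∑ i : Fin n, ‖Φ.mulVec x i‖ ^ 2) : ℂ) = (↑σ : ℂ) + E :=
      step1.trans (step2.trans (by rw [step3]))
    have := congrArg Complex.re hchain
    rwa [Complex.ofReal_re, Complex.add_re, Complex.ofReal_re] at this
  -- Step 4: bound E
  have hEb := global_bound c H hδ (2 * s) S (by exact_mod_cast hx) x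
  have hSσ : ∑ i ∈ S, ‖x i‖ ^ 2 ≤ σ := by
    rw [hσdef]
    exact Finset.sum_le_sum_of_subset_of_nonneg (Finset.subset_univ S)
      (fun j _ _ => sq_nonneg _)
  set K := (Real.sqrt (2 * (Nat.clog 4 k)) + 1) ^ 2 with hKdef
  have hK0 : 0 ≤ K := sq_nonneg _
  have h1 : ‖E‖ ≤ K * (4 * (2 * (s:ℝ) + 1)) * (δ * σ) := by
    refine hEb.trans ?_
    have e : (((2 * s : ℕ) : ℝ) + 1) = 2 * (s:ℝ) + 1 := by push_cast; ring
    calc δ * (K * (4 * (((2 * s : ℕ) : ℝ) + 1) * ∑ i ∈ S, ‖x i‖ ^ 2))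
        ≤ δ * (K * (4 * (((2 * s : ℕ) : ℝ) + 1) * σ)) := by
          refine mul_le_mul_of_nonneg_left (mul_le_mul_of_nonneg_left
            (mul_le_mul_of_nonneg_left hSσ (by positivity)) hK0) hδ
      _ = K * (4 * (2 * (s:ℝ) + 1)) * (δ * σ) := by rw [e]; ring
  have hnum := num_bound k s hk hs
  have h2 : K * (4 * (2 * (s:ℝ) + 1)) * (δ * σ) ≤ 44 * (s:ℝ) * Real.log k * (δ * σ) :=
    mul_le_mul_of_nonneg_right hnum (mul_nonneg hδ hσ0)
  have h3 : |E.re| ≤ 44 * (s:ℝ) * Real.log k * (δ * σ) := by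
    calc |E.re| ≤ ‖E‖ := Complex.abs_re_le_norm E
      _ = ‖E‖ := rfl
      _ ≤ _ := h1.trans h2
  obtain ⟨h4, h5⟩ := abs_le.mp h3
  constructor
  · rw [hid]
    nlinarith
  · rw [hid]
    nlinarith
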